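/- arXiv:2506.09051 — 2 statements merged into one kernel-verified Lean document; each statement's English description precedes it below -/
import Mathlib

section
/- Let I = ⟨u_1, u_2⟩ be a height-two complete intersection monomial ideal in S with u_1 = (x_{i_1}···x_{i_q})^α and u_2 = x_{j_1}^{β_1}···x_{j_l}^{β_l}, where 1 ≤ α ≤ β_1 ≤ ... ≤ β_l and q ≤ l, and {x_{i_p}} disjoint from {x_{j_t}}. Then for all n ≥ 1 and every associated prime P of \overline{I^n}, v(\overline{I^n}) = v_P(\overline{I^n}) = n·qα + ∑_{j=1}^l ⌈β_j/α⌉ − 2. -/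
open MvPolynomial Ideal

/-- The integral closure of an ideal. -/
noncomputable def intClosure {R : Type*} [CommRing R] (I : Ideal R) : Ideal R :=
  Ideal.span {x : R | ∃ n : ℕ, 0 < n ∧ ∃ c : ℕ → R,
    (∀ i ∈ Finset.Icc 1 n, c i ∈ I ^ i) ∧
    x ^ n + ∑ i ∈ Finset.Icc 1 n, c i * x ^ (n - i) = 0}

/-- The v-number of a homogeneous ideal `J`. -/
noncomputable def vnumber {K : Type*} [Field K] {σ : Type*}
    (J : Ideal (MvPolynomial σ K)) : ℕ :=
  sInf {d : ℕ | ∃ f : MvPolynomial σ K, f.IsHomogeneous d ∧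
    Submodule.colon J (Ideal.span {f}) ∈
      associatedPrimes (MvPolynomial σ K) (MvPolynomial σ K ⧸ J)}

/-- The local v-number of `J` at a prime `P`. -/
noncomputable def vnumberAt {K : Type*} [Field K] {σ : Type*}
    (J P : Ideal (MvPolynomial σ K)) : ℕ :=
  sInf {d : ℕ | ∃ f : MvPolynomial σ K, f.IsHomogeneous d ∧
    Submodule.colon J (Ideal.span {f}) = P}


namespace VP

variable {K : Type*} [Field K] {σ : Type*}

/-- weighted degree of an exponent vector -/
def wdeg (w : σ → ℕ) (e : σ →₀ ℕ) : ℕ := e.sum fun s k => k * w s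

lemma wdeg_add (w : σ → ℕ) (a b : σ →₀ ℕ) : wdeg w (a + b) = wdeg w a + wdeg w b := by
  classical
  unfold wdeg
  exact Finsupp.sum_add_index (by simp) (by intros; ring)

/-- the homomorphism recording weighted order in a polynomial variable -/
noncomputable def psi (w : σ → ℕ) : MvPolynomial σ K →ₐ[K] Polynomial (MvPolynomial σ K) :=
  aeval fun s => Polynomial.C (X s) * Polynomial.X ^ w s

lemma psi_monomial (w : σ → ℕ) (e : σ →₀ ℕ) (c : K) :
    psi w (monomial e c) = Polynomial.C (monomial e c) * Polynomial.X ^ wdeg w e := by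
  rw [psi, aeval_monomial]
  have : (e.prod fun s k => (Polynomial.C (X s (R := K)) * Polynomial.X ^ w s) ^ k)
      = Polynomial.C (e.prod fun s k => (X s : MvPolynomial σ K) ^ k) *
        Polynomial.X ^ wdeg w e := by
    rw [Finsupp.prod, Finsupp.prod, wdeg, Finsupp.sum]
    calc ∏ a ∈ e.support, (Polynomial.C (X a (R := K)) * Polynomial.X ^ w a) ^ e a
        = ∏ a ∈ e.support,
            (Polynomial.C ((X a : MvPolynomial σ K) ^ e a) * Polynomial.X ^ (e a * w a)) := by
          refine Finset.prod_congr rfl fun s _ => ?_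
          rw [mul_pow, ← map_pow, ← pow_mul, mul_comm (w s)]
      _ = _ := by
          rw [Finset.prod_mul_distrib, map_prod, Finset.prod_pow_eq_pow_sum]
  rw [this, ← mul_assoc]
  congr 1
  rw [monomial_eq, show (algebraMap K (Polynomial (MvPolynomial σ K))) c
    = Polynomial.C (C c) from rfl, ← Polynomial.C_mul]

lemma coeff_coeff_psi (w : σ → ℕ) (f : MvPolynomial σ K) (j : ℕ) (e : σ →₀ ℕ) :
    ((psi w f).coeff j).coeff e = if wdeg w e = j then f.coeff e else 0 := by
  classical
  conv_lhs => rw [f.as_sum, map_sum, Polynomial.finset_sum_coeff]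
  rw [MvPolynomial.coeff_sum]
  simp_rw [psi_monomial, Polynomial.coeff_C_mul, Polynomial.coeff_X_pow, mul_ite, mul_one,
    mul_zero, apply_ite (coeff e), coeff_monomial, coeff_zero]
  rw [Finset.sum_eq_single e]
  · simp [eq_comm]
  · intro b _ hbe
    simp [hbe]
  · intro he
    simp [MvPolynomial.notMem_support_iff.mp he]

lemma psi_ne_zero {w : σ → ℕ} {f : MvPolynomial σ K} (hf : f ≠ 0) : psi w f ≠ 0 := by
  obtain ⟨e, he⟩ := MvPolynomial.ne_zero_iff.mp hf
  intro h
  have := coeff_coeff_psi w f (wdeg w e) e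
  rw [h] at this
  simp at this
  exact he this.symm

/-- all exponents of `f` have weighted degree at least `c` -/
def ordGE (w : σ → ℕ) (f : MvPolynomial σ K) (c : ℕ) : Prop :=
  ∀ e ∈ f.support, c ≤ wdeg w e

lemma ordGE_iff_coeff {w : σ → ℕ} {f : MvPolynomial σ K} {c : ℕ} :
    ordGE w f c ↔ ∀ j < c, (psi w f).coeff j = 0 := by
  constructor
  · intro h j hj
    ext e
    rw [coeff_coeff_psi]
    split_ifs with hw
    · by_cases he : e ∈ f.support
      · exact absurd (h e he) (by omega)
      · simpa using MvPolynomial.notMem_support_iff.mp he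
    · simp
  · intro h e he
    by_contra hlt
    have h2 := coeff_coeff_psi w f (wdeg w e) e
    rw [h _ (by omega)] at h2
    simp at h2
    exact MvPolynomial.mem_support_iff.mp he h2.symm

lemma ordGE_iff_ntd {w : σ → ℕ} {f : MvPolynomial σ K} (hf : f ≠ 0) {c : ℕ} :
    ordGE w f c ↔ c ≤ (psi w f).natTrailingDegree := by
  rw [ordGE_iff_coeff]
  constructor
  · intro h
    exact Polynomial.le_natTrailingDegree (psi_ne_zero hf) h
  · intro h j hj
    exact Polynomial.coeff_eq_zero_of_lt_natTrailingDegree (by omega)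

lemma ordGE_zero (w : σ → ℕ) (f : MvPolynomial σ K) : ordGE w f 0 := fun _ _ => Nat.zero_le _

lemma ordGE_mul {w : σ → ℕ} {f g : MvPolynomial σ K} {a b : ℕ}
    (hf : ordGE w f a) (hg : ordGE w g b) : ordGE w (f * g) (a + b) := by
  classical
  intro e he
  obtain ⟨e1, he1, e2, he2, rfl⟩ := Finset.mem_add.mp (MvPolynomial.support_mul f g he)
  rw [wdeg_add]
  exact Nat.add_le_add (hf e1 he1) (hg e2 he2)

lemma ntd_psi_mul {w : σ → ℕ} {f g : MvPolynomial σ K} (hf : f ≠ 0) (hg : g ≠ 0) :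
    (psi w (f * g)).natTrailingDegree
      = (psi w f).natTrailingDegree + (psi w g).natTrailingDegree := by
  rw [_root_.map_mul]
  exact Polynomial.natTrailingDegree_mul (psi_ne_zero hf) (psi_ne_zero hg)


section PolyHelp
variable {R : Type*} [CommRing R]

lemma coeff_mul_eq_zero {p q : Polynomial R} {a b : ℕ} (hp : ∀ j < a, p.coeff j = 0)
    (hq : ∀ j < b, q.coeff j = 0) : ∀ j < a + b, (p * q).coeff j = 0 := by
  intro j hj
  rw [Polynomial.coeff_mul]
  refine Finset.sum_eq_zero fun uv huv => ?_
  rw [Finset.HasAntidiagonal.mem_antidiagonal] at huv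
  rcases Nat.lt_or_ge uv.1 a with h | h
  · rw [hp _ h, zero_mul]
  · rw [hq _ (by omega), mul_zero]

lemma ntd_pow [IsDomain R] {p : Polynomial R} (hp : p ≠ 0) (k : ℕ) :
    (p ^ k).natTrailingDegree = k * p.natTrailingDegree := by
  induction k with
  | zero => simp
  | succ k ih =>
    rw [pow_succ, Polynomial.natTrailingDegree_mul (pow_ne_zero _ hp) hp, ih]
    ring
end PolyHelp
lemma ordGE_of_mem_span_pair {w : σ → ℕ} {U V : MvPolynomial σ K} {c0 : ℕ}
    (hU : ordGE w U c0) (hV : ordGE w V c0) {g : MvPolynomial σ K}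
    (hg : g ∈ Ideal.span {U, V}) : ordGE w g c0 := by
  obtain ⟨a, b, rfl⟩ := Ideal.mem_span_pair.mp hg
  intro e he
  classical
  rcases Finset.mem_union.mp (MvPolynomial.support_add he) with h | h
  · obtain ⟨e1, _, e2, he2, rfl⟩ := Finset.mem_add.mp (MvPolynomial.support_mul _ _ h)
    rw [wdeg_add]
    exact le_add_self.trans (Nat.add_le_add_left (hU e2 he2) _)
  · obtain ⟨e1, _, e2, he2, rfl⟩ := Finset.mem_add.mp (MvPolynomial.support_mul _ _ h)
    rw [wdeg_add]
    exact le_add_self.trans (Nat.add_le_add_left (hV e2 he2) _)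

lemma ordGE_of_mem_pow {w : σ → ℕ} {A : Ideal (MvPolynomial σ K)} {c0 : ℕ}
    (hA : ∀ g ∈ A, ordGE w g c0) (i : ℕ) :
    ∀ g ∈ A ^ i, ordGE w g (i * c0) := by
  induction i with
  | zero => intro g _; simpa using ordGE_zero w g
  | succ i ih =>
    intro g hg
    rw [pow_succ] at hg
    refine Submodule.mul_induction_on hg (fun m hm n hn => ?_) (fun a b ha hb e he => ?_)
    · have : (i + 1) * c0 = i * c0 + c0 := by ring
      rw [this]
      exact ordGE_mul (ih m hm) (hA n hn)
    · classical
      rcases Finset.mem_union.mp (MvPolynomial.support_add he) with h | h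
      · exact ha e h
      · exact hb e h

/-- Key: every exponent of an element integral over `A` has weighted degree `≥ c0`,
provided all elements of `A` do. -/
lemma integral_ordGE {w : σ → ℕ} {A : Ideal (MvPolynomial σ K)} {c0 : ℕ}
    (hA : ∀ g ∈ A, ordGE w g c0)
    {f : MvPolynomial σ K} {k : ℕ} (hk : 0 < k) {c : ℕ → MvPolynomial σ K}
    (hc : ∀ i ∈ Finset.Icc 1 k, c i ∈ A ^ i)
    (heq : f ^ k + ∑ i ∈ Finset.Icc 1 k, c i * f ^ (k - i) = 0) :
    ordGE w f c0 := by
  by_cases hf : f = 0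
  · subst hf; intro e he; simp at he
  by_contra hcon
  have hd : (psi w f).natTrailingDegree < c0 := by
    rcases Nat.lt_or_ge ((psi w f).natTrailingDegree) c0 with h | h
    · exact h
    · exact absurd ((ordGE_iff_ntd hf).mpr h) hcon
  set d := (psi w f).natTrailingDegree with hdd
  have heq2 : (psi w f) ^ k = -∑ i ∈ Finset.Icc 1 k, psi w (c i) * (psi w f) ^ (k - i) := by
    have h1 : f ^ k = -∑ i ∈ Finset.Icc 1 k, c i * f ^ (k - i) :=
      eq_neg_of_add_eq_zero_left heq
    calc (psi w f) ^ k = psi w (f ^ k) := (map_pow _ _ _).symm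
      _ = psi w (-∑ i ∈ Finset.Icc 1 k, c i * f ^ (k - i)) := by rw [← h1]
      _ = _ := by
        rw [map_neg, map_sum]
        congr 1
        refine Finset.sum_congr rfl fun i _ => ?_
        rw [_root_.map_mul, map_pow]
  have hne : ((psi w f) ^ k).coeff (k * d) ≠ 0 := by
    have h1 : ((psi w f) ^ k).natTrailingDegree = k * d := ntd_pow (psi_ne_zero hf) k
    have h2 : ((psi w f) ^ k).trailingCoeff ≠ 0 :=
      Polynomial.trailingCoeff_nonzero_iff_nonzero.mpr (pow_ne_zero _ (psi_ne_zero hf))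
    rwa [Polynomial.trailingCoeff, h1] at h2
  apply hne
  rw [heq2, Polynomial.coeff_neg, Polynomial.finset_sum_coeff]
  rw [Finset.sum_eq_zero, neg_zero]
  intro i hi
  rw [Finset.mem_Icc] at hi
  have hordc : ordGE w (c i) (i * c0) := ordGE_of_mem_pow hA i _ (hc i (Finset.mem_Icc.mpr hi))
  refine coeff_mul_eq_zero (a := i * c0) (b := (k - i) * d) ?_ ?_ _ ?_
  · exact ordGE_iff_coeff.mp hordc
  · intro j hj
    rw [← map_pow]
    refine Polynomial.coeff_eq_zero_of_lt_natTrailingDegree ?_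
    rcases Nat.eq_zero_or_pos (k - i) with h0 | h0
    · rw [h0] at hj; omega
    · rwa [map_pow, ntd_pow (psi_ne_zero hf)]
  · have h1 : i * d + (k - i) * d = k * d := by
      rw [← Nat.add_mul]; congr 1; omega
    have h2 : i * d < i * c0 := Nat.mul_lt_mul_of_le_of_lt (le_refl i) hd (by omega)
    omega
def suppIdeal (S : Set (σ →₀ ℕ)) (hS : ∀ a b, b ∈ S → a + b ∈ S) :
    Ideal (MvPolynomial σ K) where
  carrier := {f | ∀ e ∈ f.support, e ∈ S}
  add_mem' := by
    classical
    intro f g hf hg e he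
    rcases Finset.mem_union.mp (MvPolynomial.support_add he) with h | h
    · exact hf e h
    · exact hg e h
  zero_mem' := by simp
  smul_mem' := by
    classical
    intro r f hf e he
    rw [smul_eq_mul] at he
    obtain ⟨e1, _, e2, he2, rfl⟩ := Finset.mem_add.mp (MvPolynomial.support_mul r f he)
    exact hS e1 e2 (hf e2 he2)

lemma mem_suppIdeal_iff {S : Set (σ →₀ ℕ)} {hS : ∀ a b, b ∈ S → a + b ∈ S}
    {f : MvPolynomial σ K} : f ∈ suppIdeal S hS ↔ ∀ e ∈ f.support, e ∈ S := Iff.rfl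

lemma apply_sum_single_of_inj {r : ℕ} {z : Fin r → σ} (hz : Function.Injective z)
    (c : Fin r → ℕ) (i : Fin r) : (∑ j, Finsupp.single (z j) (c j)) (z i) = c i := by
  classical
  rw [Finsupp.finset_sum_apply]
  rw [Finset.sum_eq_single i]
  · simp [Finsupp.single_apply]
  · intro j _ hj
    rw [Finsupp.single_apply, if_neg (fun h => hj (hz h))]
  · simp

lemma apply_sum_single_of_ne {r : ℕ} {z : Fin r → σ} (c : Fin r → ℕ) {s : σ}
    (hs : ∀ j, z j ≠ s) : (∑ j, Finsupp.single (z j) (c j)) s = 0 := by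
  classical
  rw [Finsupp.finset_sum_apply]
  refine Finset.sum_eq_zero fun j _ => ?_
  rw [Finsupp.single_apply, if_neg (hs j)]

section Context

variable {q l : ℕ} (x : Fin q → σ) (y : Fin l → σ) (α : ℕ) (β : Fin l → ℕ) (n : ℕ)

open Classical in
noncomputable def wpt (p : Fin q) (t : Fin l) : σ → ℕ :=
  fun s => if s = x p then β t else if s = y t then α else 0

lemma wdeg_wpt (hxy : ∀ p t, x p ≠ y t) (p : Fin q) (t : Fin l) (e : σ →₀ ℕ) :
    wdeg (wpt x y α β p t) e = e (x p) * β t + e (y t) * α := by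
  classical
  rw [wdeg, Finsupp.sum]
  have key : ∀ s, e s * wpt x y α β p t s
      = ((if s = x p then e s * β t else 0) + (if s = y t then e s * α else 0)) := by
    intro s
    rw [wpt]
    split_ifs with h1 h2 h2
    · exact absurd (h1 ▸ h2) (hxy p t)
    · simp
    · simp
    · simp
  calc ∑ s ∈ e.support, e s * wpt x y α β p t s
      = (∑ s ∈ e.support, if s = x p then e s * β t else 0)
        + ∑ s ∈ e.support, if s = y t then e s * α else 0 := by
        rw [← Finset.sum_add_distrib]; exact Finset.sum_congr rfl fun s _ => key s
    _ = e (x p) * β t + e (y t) * α := by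
        rw [Finset.sum_ite_eq' e.support (x p) (fun s => e s * β t),
          Finset.sum_ite_eq' e.support (y t) (fun s => e s * α)]
        congr 1
        · split_ifs with h
          · rfl
          · rw [Finsupp.notMem_support_iff.mp h, zero_mul]
        · split_ifs with h
          · rfl
          · rw [Finsupp.notMem_support_iff.mp h, zero_mul]

/-- the "one-pair" condition -/
def OkP (p : Fin q) (t : Fin l) : Set (σ →₀ ℕ) :=
  {e | n * (α * β t) ≤ wdeg (wpt x y α β p t) e}

def OkS : Set (σ →₀ ℕ) := {e | ∀ p t, e ∈ OkP x y α β n p t}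

lemma OkP_upward (p : Fin q) (t : Fin l) :
    ∀ a b, b ∈ OkP x y α β n p t → a + b ∈ OkP x y α β n p t := by
  intro a b hb
  simp only [OkP, Set.mem_setOf_eq, wdeg_add] at hb ⊢
  omega

lemma OkS_upward : ∀ a b : σ →₀ ℕ, b ∈ OkS x y α β n → a + b ∈ OkS x y α β n :=
  fun a b hb p t => OkP_upward x y α β n p t a b (hb p t)

noncomputable def Jpt (p : Fin q) (t : Fin l) : Ideal (MvPolynomial σ K) :=
  suppIdeal (OkP x y α β n p t) (OkP_upward x y α β n p t)

noncomputable def Jcl : Ideal (MvPolynomial σ K) :=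
  suppIdeal (OkS x y α β n) (OkS_upward x y α β n)


variable {K : Type*} [Field K]

lemma ordGE_monomial {w : σ → ℕ} {e : σ →₀ ℕ} {c : ℕ} (h : c ≤ wdeg w e) (a : K) :
    ordGE w (monomial e a) c := by
  classical
  intro e' he'
  rw [MvPolynomial.support_monomial] at he'
  split_ifs at he' with h0
  · simp at he'
  · rw [Finset.mem_singleton] at he'
    subst he'
    exact h

lemma eval_u (hx : Function.Injective x) (hxy : ∀ p t, x p ≠ y t) (p : Fin q) (t : Fin l) :
    (∑ p', Finsupp.single (x p') α) (x p) = α ∧ (∑ p', Finsupp.single (x p') α) (y t) = 0 :=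
  ⟨apply_sum_single_of_inj hx _ p, apply_sum_single_of_ne _ (fun j => hxy j t)⟩

lemma eval_v (hy : Function.Injective y) (hxy : ∀ p t, x p ≠ y t) (p : Fin q) (t : Fin l) :
    (∑ t', Finsupp.single (y t') (β t')) (y t) = β t
      ∧ (∑ t', Finsupp.single (y t') (β t')) (x p) = 0 :=
  ⟨apply_sum_single_of_inj hy _ t, apply_sum_single_of_ne _ (fun j => (hxy p j).symm)⟩

lemma pow_mem_ordGE (hx : Function.Injective x) (hy : Function.Injective y)
    (hxy : ∀ p t, x p ≠ y t)
    {I : Ideal (MvPolynomial σ K)}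
    (hI : I = Ideal.span
      {(monomial (∑ p, Finsupp.single (x p) α) 1 : MvPolynomial σ K),
       (monomial (∑ t, Finsupp.single (y t) (β t)) 1 : MvPolynomial σ K)})
    (p : Fin q) (t : Fin l) :
    ∀ g ∈ I ^ n, ordGE (wpt x y α β p t) g (n * (α * β t)) := by
  have hU : ordGE (wpt x y α β p t) (monomial (∑ p', Finsupp.single (x p') α) 1 :
      MvPolynomial σ K) (α * β t) := by
    refine ordGE_monomial ?_ 1
    rw [wdeg_wpt x y α β hxy, (eval_u x y α hx hxy p t).1, (eval_u x y α hx hxy p t).2]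
    simp
  have hV : ordGE (wpt x y α β p t) (monomial (∑ t', Finsupp.single (y t') (β t')) 1 :
      MvPolynomial σ K) (α * β t) := by
    refine ordGE_monomial ?_ 1
    rw [wdeg_wpt x y α β hxy, (eval_v x y β hy hxy p t).1, (eval_v x y β hy hxy p t).2]
    simp [mul_comm]
  exact ordGE_of_mem_pow (fun g hg => ordGE_of_mem_span_pair hU hV (hI ▸ hg)) n

set_option maxHeartbeats 1000000 in
theorem intClosure_eq (hq : 1 ≤ q) (hx : Function.Injective x) (hy : Function.Injective y)
    (hxy : ∀ p t, x p ≠ y t) (hα : 1 ≤ α) (hαβ : ∀ t, α ≤ β t) (hn : 1 ≤ n)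
    {I : Ideal (MvPolynomial σ K)}
    (hI : I = Ideal.span
      {(monomial (∑ p, Finsupp.single (x p) α) 1 : MvPolynomial σ K),
       (monomial (∑ t, Finsupp.single (y t) (β t)) 1 : MvPolynomial σ K)}) :
    intClosure (I ^ n) = Jcl (K := K) x y α β n := by
  apply le_antisymm
  · -- integral elements are in Jcl
    rw [intClosure, Ideal.span_le]
    rintro f ⟨k, hk, c, hc, heq⟩
    intro e he p t
    exact integral_ordGE (pow_mem_ordGE x y α β n hx hy hxy hI p t) hk hc heq e he
  · -- Jcl is contained in the integral closure
    intro f hf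
    rw [MvPolynomial.as_sum f]
    refine Ideal.sum_mem _ fun e he => ?_
    have hmem : (monomial e 1 : MvPolynomial σ K) ∈ intClosure (I ^ n) := by
      -- the key computation
      have hOk : ∀ p t, n * (α * β t) ≤ e (x p) * β t + e (y t) * α := by
        intro p t
        have := hf e he p t
        rwa [OkP, Set.mem_setOf_eq, wdeg_wpt x y α β hxy] at this
      set L := ∏ t, β t with hL
      have hLpos : 0 < L := Finset.prod_pos fun t _ => lt_of_lt_of_le hα (hαβ t)
      set kk := α * L with hkk
      have hkkpos : 0 < kk := Nat.mul_pos hα hLpos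
      haveI : Nonempty (Fin q) := Fin.pos_iff_nonempty.mp hq
      set i0 := min (n * kk) (Finset.univ.inf' Finset.univ_nonempty fun p => L * e (x p))
        with hi0
      have hi0a : ∀ p, i0 ≤ L * e (x p) := fun p =>
        (min_le_right _ _).trans (Finset.inf'_le _ (Finset.mem_univ p))
      have hi0b : i0 ≤ n * kk := min_le_left _ _
      have hi0c : ∀ t, (n * kk - i0) * β t ≤ kk * e (y t) := by
        intro t
        rw [Nat.sub_mul, tsub_le_iff_right]
        obtain ⟨pm, _, hpm⟩ :=
          Finset.exists_mem_eq_inf' (Finset.univ_nonempty (α := Fin q)) fun p => L * e (x p)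
        rcases le_total (n * kk) (L * e (x pm)) with hcase | hcase
        · have : i0 = n * kk := by rw [hi0, hpm, min_eq_left hcase]
          rw [this]
          omega
        · have hi0v : i0 = L * e (x pm) := by rw [hi0, hpm, min_eq_right hcase]
          have hmul : L * (n * (α * β t)) ≤ L * (e (x pm) * β t + e (y t) * α) :=
            Nat.mul_le_mul_left L (hOk pm t)
          calc n * kk * β t = L * (n * (α * β t)) := by rw [hkk]; ring
            _ ≤ L * (e (x pm) * β t + e (y t) * α) := hmul
            _ = kk * e (y t) + i0 * β t := by rw [hkk, hi0v]; ring
      set u : σ →₀ ℕ := ∑ p, Finsupp.single (x p) α with hu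
      set v : σ →₀ ℕ := ∑ t, Finsupp.single (y t) (β t) with hv
      set d : σ →₀ ℕ := i0 • u + (n * kk - i0) • v with hd
      have hdle : d ≤ kk • e := by
        rw [Finsupp.le_def]
        intro s
        rw [hd, Finsupp.add_apply, Finsupp.smul_apply, Finsupp.smul_apply, Finsupp.smul_apply,
          smul_eq_mul, smul_eq_mul, smul_eq_mul]
        by_cases hs1 : ∃ p, x p = s
        · obtain ⟨p, rfl⟩ := hs1
          rw [hu, hv, apply_sum_single_of_inj hx _ p,
            apply_sum_single_of_ne _ (fun j => (hxy p j).symm)]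
          have := hi0a p
          have : i0 * α ≤ α * (L * e (x p)) := by
            calc i0 * α ≤ (L * e (x p)) * α := Nat.mul_le_mul_right α (hi0a p)
              _ = α * (L * e (x p)) := by ring
          have h2 : α * (L * e (x p)) = kk * e (x p) := by rw [hkk]; ring
          omega
        · by_cases hs2 : ∃ t, y t = s
          · obtain ⟨t, rfl⟩ := hs2
            rw [hu, hv, apply_sum_single_of_inj hy _ t,
              apply_sum_single_of_ne _ (fun j => hxy j t)]
            have := hi0c t
            omega
          · push_neg at hs1 hs2
            rw [hu, hv, apply_sum_single_of_ne _ hs1, apply_sum_single_of_ne _ hs2]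
            simp
      refine Ideal.subset_span ⟨kk, hkkpos, fun i => if i = kk
        then -((monomial e 1 : MvPolynomial σ K) ^ kk) else 0, ?_, ?_⟩
      · intro i hi
        dsimp only
        split_ifs with hik
        · subst hik
          refine neg_mem ?_
          rw [monomial_pow, one_pow, ← pow_mul]
          have : monomial (i0 • u) (1 : K) * monomial ((n * kk - i0) • v) 1 ∈ I ^ (n * kk) := by
            have hU : (monomial u (1:K)) ∈ I := by
              rw [hI, hu]; exact Ideal.subset_span (Set.mem_insert _ _)
            have hV : (monomial v (1:K)) ∈ I := by
              rw [hI, hv]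
              exact Ideal.subset_span (Set.mem_insert_of_mem _ rfl)
            have h1 : (monomial u (1:K)) ^ i0 ∈ I ^ i0 := Ideal.pow_mem_pow hU i0
            have h2 : (monomial v (1:K)) ^ (n * kk - i0) ∈ I ^ (n * kk - i0) :=
              Ideal.pow_mem_pow hV _
            have h3 := Ideal.mul_mem_mul h1 h2
            rw [← pow_add] at h3
            simp only [monomial_pow, one_pow] at h3
            have he : i0 + (n * kk - i0) = n * kk := by omega
            rwa [he] at h3
          rw [monomial_mul, mul_one] at this
          have hsplit : (monomial (kk • e) (1:K))
              = monomial (kk • e - d) 1 * monomial d 1 := by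
            rw [monomial_mul, mul_one, tsub_add_cancel_of_le hdle]
          rw [hsplit, hd]
          exact Ideal.mul_mem_left _ _ this
        · exact zero_mem _
      · simp only [ite_mul, zero_mul, neg_mul]
        rw [Finset.sum_ite_eq' (Finset.Icc 1 kk) kk]
        rw [if_pos (Finset.mem_Icc.mpr ⟨hkkpos, le_refl kk⟩)]
        rw [Nat.sub_self, pow_zero, mul_one, add_neg_cancel]
    have : (monomial e (coeff e f) : MvPolynomial σ K) = C (coeff e f) * monomial e 1 := by
      rw [C_mul_monomial, mul_one]
    rw [this]
    exact Ideal.mul_mem_left _ _ hmem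

noncomputable def Ppair (p : Fin q) (t : Fin l) : Ideal (MvPolynomial σ K) :=
  Ideal.span {X (x p), X (y t)}

lemma mem_Ppair_iff {p : Fin q} {t : Fin l} {g : MvPolynomial σ K} :
    g ∈ Ppair (K := K) x y p t ↔ ∀ e ∈ g.support, e (x p) ≠ 0 ∨ e (y t) ≠ 0 := by
  classical
  constructor
  · intro hg e he
    obtain ⟨a, b, rfl⟩ := Ideal.mem_span_pair.mp hg
    rcases Finset.mem_union.mp (MvPolynomial.support_add he) with h | h
    · obtain ⟨e1, _, e2, he2, rfl⟩ := Finset.mem_add.mp (MvPolynomial.support_mul _ _ h)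
      rw [MvPolynomial.support_X, Finset.mem_singleton] at he2
      subst he2
      left
      simp [Finsupp.single_apply]
    · obtain ⟨e1, _, e2, he2, rfl⟩ := Finset.mem_add.mp (MvPolynomial.support_mul _ _ h)
      rw [MvPolynomial.support_X, Finset.mem_singleton] at he2
      subst he2
      right
      simp [Finsupp.single_apply]
  · intro h
    rw [MvPolynomial.as_sum g]
    refine Ideal.sum_mem _ fun e he => ?_
    rcases h e he with h1 | h1
    · have hle : Finsupp.single (x p) 1 ≤ e := Finsupp.single_le_iff.mpr (by omega)
      have : (monomial e (coeff e g) : MvPolynomial σ K)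
          = monomial (e - Finsupp.single (x p) 1) (coeff e g) * X (x p) := by
        rw [X, monomial_mul, mul_one, tsub_add_cancel_of_le hle]
      rw [this]
      exact Ideal.mul_mem_left _ _ (Ideal.subset_span (Set.mem_insert _ _))
    · have hle : Finsupp.single (y t) 1 ≤ e := Finsupp.single_le_iff.mpr (by omega)
      have : (monomial e (coeff e g) : MvPolynomial σ K)
          = monomial (e - Finsupp.single (y t) 1) (coeff e g) * X (y t) := by
        rw [X, monomial_mul, mul_one, tsub_add_cancel_of_le hle]
      rw [this]
      exact Ideal.mul_mem_left _ _ (Ideal.subset_span (Set.mem_insert_of_mem _ rfl))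

lemma X_mem_Ppair {s : σ} {p : Fin q} {t : Fin l}
    (h : (X s : MvPolynomial σ K) ∈ Ppair (K := K) x y p t) : s = x p ∨ s = y t := by
  classical
  have := (mem_Ppair_iff x y).mp h (Finsupp.single s 1) (by
    rw [MvPolynomial.support_X]; exact Finset.mem_singleton_self _)
  rcases this with h1 | h1
  · left
    by_contra hne
    rw [Finsupp.single_apply, if_neg hne] at h1
    exact h1 rfl
  · right
    by_contra hne
    rw [Finsupp.single_apply, if_neg hne] at h1
    exact h1 rfl

lemma mem_colon_suppIdeal_monomial {S : Set (σ →₀ ℕ)} {hS : ∀ a b, b ∈ S → a + b ∈ S}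
    {e : σ →₀ ℕ} {g : MvPolynomial σ K} :
    g ∈ Submodule.colon (suppIdeal S hS) (Ideal.span {(monomial e 1 : MvPolynomial σ K)})
      ↔ ∀ ε ∈ g.support, ε + e ∈ S := by
  classical
  rw [show Ideal.span {(monomial e 1 : MvPolynomial σ K)}
    = Submodule.span (MvPolynomial σ K) {(monomial e 1 : MvPolynomial σ K)} from rfl,
    Submodule.mem_colon_span_singleton, smul_eq_mul]
  constructor
  · intro h ε hε
    refine h (ε + e) ?_
    rw [MvPolynomial.mem_support_iff, coeff_mul_monomial, mul_one]
    exact MvPolynomial.mem_support_iff.mp hε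
  · intro h δ hδ
    obtain ⟨e1, he1, e2, he2, rfl⟩ := Finset.mem_add.mp (MvPolynomial.support_mul _ _ hδ)
    rw [MvPolynomial.support_monomial, if_neg (one_ne_zero (α := K)), Finset.mem_singleton]
      at he2
    subst he2
    exact h e1 he1

lemma exists_term_not_mem {P : Ideal (MvPolynomial σ K)} {g : MvPolynomial σ K} (hg : g ∉ P) :
    ∃ e ∈ g.support, (monomial e 1 : MvPolynomial σ K) ∉ P := by
  by_contra hcon
  push_neg at hcon
  apply hg
  rw [MvPolynomial.as_sum g]
  refine Ideal.sum_mem _ fun e he => ?_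
  have : (monomial e (coeff e g) : MvPolynomial σ K) = C (coeff e g) * monomial e 1 := by
    rw [C_mul_monomial, mul_one]
  rw [this]
  exact Ideal.mul_mem_left _ _ (hcon e he)

lemma prod_not_mem {P : Ideal (MvPolynomial σ K)} (hP : P.IsPrime) {ι : Type*} (s : Finset ι)
    (g : ι → MvPolynomial σ K) (h : ∀ i ∈ s, g i ∉ P) : (∏ i ∈ s, g i) ∉ P := by
  intro hm
  obtain ⟨i, hi, hgi⟩ := (Ideal.IsPrime.prod_mem_iff (hp := hP)).mp hm
  exact h i hi hgi

lemma prod_monomial {ι : Type*} (s : Finset ι) (E : ι → (σ →₀ ℕ)) :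
    (∏ i ∈ s, (monomial (E i) 1 : MvPolynomial σ K)) = monomial (∑ i ∈ s, E i) 1 := by
  classical
  induction s using Finset.induction_on with
  | empty => simp [monomial_zero']
  | insert _ _ hnotmem ih =>
    rw [Finset.prod_insert hnotmem, Finset.sum_insert hnotmem, ih, monomial_mul, mul_one]

lemma colon_le_Ppair_of_not_mem (hxy : ∀ p t, x p ≠ y t) {p : Fin q} {t : Fin l}
    {f : MvPolynomial σ K} (hf0 : f ≠ 0) (hf : f ∉ Jpt (K := K) x y α β n p t) :
    Submodule.colon (Jpt (K := K) x y α β n p t) (Ideal.span {f})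
      ≤ Ppair (K := K) x y p t := by
  classical
  intro g hg
  rw [show Ideal.span {f} = Submodule.span (MvPolynomial σ K) {f} from rfl,
    Submodule.mem_colon_span_singleton, smul_eq_mul] at hg
  by_contra hgP
  have hg0 : g ≠ 0 := fun h => hgP (h ▸ zero_mem _)
  obtain ⟨ε0, hε0, hε0x, hε0y⟩ : ∃ ε0 ∈ g.support, ε0 (x p) = 0 ∧ ε0 (y t) = 0 := by
    by_contra hcon
    push_neg at hcon
    exact hgP ((mem_Ppair_iff x y).mpr fun e he => by
      rcases Nat.eq_zero_or_pos (e (x p)) with h1 | h1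
      · exact Or.inr (by have := hcon e he h1; omega)
      · exact Or.inl (by omega))
  have hgord : ¬ ordGE (wpt x y α β p t) g 1 := by
    intro hord
    have := hord ε0 hε0
    rw [wdeg_wpt x y α β hxy, hε0x, hε0y] at this
    omega
  obtain ⟨δ0, hδ0, hδ0bad⟩ : ∃ δ0 ∈ f.support, δ0 ∉ OkP x y α β n p t := by
    by_contra hcon
    push_neg at hcon
    exact hf fun e he => hcon e he
  have hford : ¬ ordGE (wpt x y α β p t) f (n * (α * β t)) := by
    intro hord
    exact hδ0bad (hord δ0 hδ0)
  have hgford : ordGE (wpt x y α β p t) (g * f) (n * (α * β t)) := fun e he => hg e he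
  have hgf0 : g * f ≠ 0 := mul_ne_zero hg0 hf0
  rw [ordGE_iff_ntd hg0] at hgord
  rw [ordGE_iff_ntd hf0] at hford
  rw [ordGE_iff_ntd hgf0, ntd_psi_mul hg0 hf0] at hgford
  omega

lemma mem_Ppair_of_pow_mem (hα : 1 ≤ α) (hαβ : ∀ t, α ≤ β t) (hxy : ∀ p t, x p ≠ y t)
    {p : Fin q} {t : Fin l} {r : MvPolynomial σ K} {m : ℕ}
    (h : r ^ m ∈ Ppair (K := K) x y p t) : r ∈ Ppair (K := K) x y p t := by
  classical
  by_cases hr0 : r = 0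
  · rw [hr0]; exact zero_mem _
  have hord : ordGE (wpt x y α β p t) (r ^ m) 1 := by
    intro e he
    rw [wdeg_wpt x y α β hxy]
    have hb := hαβ t
    rcases (mem_Ppair_iff x y).mp h e he with h1 | h1
    · have : 1 ≤ e (x p) * β t := Nat.one_le_iff_ne_zero.mpr (Nat.mul_ne_zero h1 (by omega))
      omega
    · have : 1 ≤ e (y t) * α := Nat.one_le_iff_ne_zero.mpr (Nat.mul_ne_zero h1 (by omega))
      omega
  rw [ordGE_iff_ntd (pow_ne_zero _ hr0), map_pow, ntd_pow (psi_ne_zero hr0)] at hord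
  have h1 : 1 ≤ (psi (wpt x y α β p t) r).natTrailingDegree := by
    rcases Nat.eq_zero_or_pos (psi (wpt x y α β p t) r).natTrailingDegree with h0 | h0
    · rw [h0, mul_zero] at hord; omega
    · exact h0
  have hr := (ordGE_iff_ntd hr0).mpr h1
  refine (mem_Ppair_iff x y).mpr fun e he => ?_
  have := hr e he
  rw [wdeg_wpt x y α β hxy] at this
  by_contra hc
  push_neg at hc
  rw [hc.1, hc.2] at this
  simp at this

lemma ident (hq : 1 ≤ q) (hx : Function.Injective x) (hy : Function.Injective y)
    (hxy : ∀ p t, x p ≠ y t) (hα : 1 ≤ α) (hαβ : ∀ t, α ≤ β t) (hn : 1 ≤ n)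
    {f : MvPolynomial σ K} (hf0 : f ≠ 0) {P : Ideal (MvPolynomial σ K)} (hP : P.IsPrime)
    (hPf : P = (Submodule.colon (Jcl (K := K) x y α β n) (Ideal.span {f})).radical) :
    ∃ p1 t1, ∃ e1 ∈ f.support, P = Ppair (K := K) x y p1 t1
      ∧ e1 ∉ OkP x y α β n p1 t1
      ∧ (X (x p1) : MvPolynomial σ K) ∈ P ∧ (X (y t1) : MvPolynomial σ K) ∈ P := by
  classical
  have hPtop : P ≠ ⊤ := hP.ne_top
  -- Step 1: find a monomial of f whose colon is contained in P
  have hex : ∃ e1 ∈ f.support,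
      Submodule.colon (Jcl (K := K) x y α β n)
        (Ideal.span {(monomial e1 1 : MvPolynomial σ K)}) ≤ P := by
    by_contra hcon
    push_neg at hcon
    have hsel : ∀ e : {e // e ∈ f.support},
        ∃ ε, (ε + e.1 ∈ OkS x y α β n) ∧ (monomial ε 1 : MvPolynomial σ K) ∉ P := by
      rintro ⟨e, he⟩
      obtain ⟨g, hg1, hg2⟩ := SetLike.not_le_iff_exists.mp (hcon e he)
      obtain ⟨ε, hεsupp, hεP⟩ := exists_term_not_mem hg2
      exact ⟨ε, mem_colon_suppIdeal_monomial.mp hg1 ε hεsupp, hεP⟩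
    choose Eps hEps1 hEps2 using hsel
    set G : MvPolynomial σ K := ∏ e ∈ f.support.attach, monomial (Eps e) 1 with hG
    have hGP : G ∉ P := prod_not_mem hP _ _ fun e _ => hEps2 e
    apply hGP
    rw [hPf]
    refine Ideal.le_radical ?_
    rw [show Ideal.span {f} = Submodule.span (MvPolynomial σ K) {f} from rfl,
      Submodule.mem_colon_span_singleton, smul_eq_mul]
    rw [hG, prod_monomial]
    intro δ hδ
    obtain ⟨e1, he1, e2, he2, rfl⟩ := Finset.mem_add.mp (MvPolynomial.support_mul _ _ hδ)
    rw [MvPolynomial.support_monomial, if_neg (one_ne_zero (α := K)), Finset.mem_singleton]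
      at he1
    subst he1
    have hmem2 : (⟨e2, he2⟩ : {e // e ∈ f.support}) ∈ f.support.attach :=
      Finset.mem_attach _ _
    have hsum : (∑ e ∈ f.support.attach, Eps e)
        = Eps ⟨e2, he2⟩ + ∑ e ∈ f.support.attach.erase ⟨e2, he2⟩, Eps e :=
      (Finset.add_sum_erase _ _ hmem2).symm
    rw [hsum]
    have : Eps ⟨e2, he2⟩ + (∑ e ∈ f.support.attach.erase ⟨e2, he2⟩, Eps e) + e2
        = (∑ e ∈ f.support.attach.erase ⟨e2, he2⟩, Eps e) + (Eps ⟨e2, he2⟩ + e2) := by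
      abel
    rw [this]
    exact OkS_upward x y α β n _ _ (hEps1 ⟨e2, he2⟩)
  obtain ⟨e1, he1, hcolon_le⟩ := hex
  -- e1 is not in OkS
  have he1bad : e1 ∉ OkS x y α β n := by
    intro hOk
    apply hPtop
    rw [Ideal.eq_top_iff_one]
    refine hcolon_le (mem_colon_suppIdeal_monomial.mpr fun ε hε => ?_)
    have : ε = 0 := by
      have h1 : (1 : MvPolynomial σ K) = monomial 0 1 := by rw [monomial_zero']; simp
      rw [h1, MvPolynomial.support_monomial, if_neg (one_ne_zero (α := K))] at hε
      exact Finset.mem_singleton.mp hε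
    rw [this, zero_add]
    exact hOk
  -- Step 2: hitting set argument
  have hpair : ∃ p1 t1, e1 ∉ OkP x y α β n p1 t1
      ∧ (X (x p1) : MvPolynomial σ K) ∈ P ∧ (X (y t1) : MvPolynomial σ K) ∈ P := by
    by_contra hcon
    push_neg at hcon
    set Esel : Fin q × Fin l → (σ →₀ ℕ) := fun pt =>
      if e1 ∈ OkP x y α β n pt.1 pt.2 then 0
      else if (X (x pt.1) : MvPolynomial σ K) ∈ P then Finsupp.single (y pt.2) (n * β pt.2)
      else Finsupp.single (x pt.1) (n * α) with hEsel
    have hnot : ∀ pt : Fin q × Fin l, (monomial (Esel pt) 1 : MvPolynomial σ K) ∉ P := by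
      intro pt
      rw [hEsel]
      dsimp only
      split_ifs with h1 h2
      · rw [monomial_zero']
        simp only [map_one]
        intro h
        exact hPtop (Ideal.eq_top_iff_one P |>.mpr h)
      · rw [← X_pow_eq_monomial]
        intro h
        have := hP.mem_of_pow_mem _ h
        exact hcon pt.1 pt.2 h1 h2 this
      · rw [← X_pow_eq_monomial]
        intro h
        exact h2 (hP.mem_of_pow_mem _ h)
    have hGP : (∏ pt : Fin q × Fin l, (monomial (Esel pt) 1 : MvPolynomial σ K)) ∉ P :=
      prod_not_mem hP _ _ fun pt _ => hnot pt
    apply hGP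
    refine hcolon_le ?_
    rw [prod_monomial]
    refine mem_colon_suppIdeal_monomial.mpr ?_
    intro ε hε
    rw [MvPolynomial.support_monomial, if_neg (one_ne_zero (α := K)), Finset.mem_singleton]
      at hε
    subst hε
    set Etot := ∑ pt : Fin q × Fin l, Esel pt with hEtot
    intro p t
    by_cases hOk1 : e1 ∈ OkP x y α β n p t
    · have : wdeg (wpt x y α β p t) (Etot + e1)
          = wdeg (wpt x y α β p t) Etot + wdeg (wpt x y α β p t) e1 := wdeg_add _ _ _
      rw [OkP, Set.mem_setOf_eq, this]
      have := hOk1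
      rw [OkP, Set.mem_setOf_eq] at this
      omega
    · -- the own factor fixes the pair
      rw [OkP, Set.mem_setOf_eq, wdeg_wpt x y α β hxy]
      rw [Finsupp.add_apply, Finsupp.add_apply]
      by_cases hxP : (X (x p) : MvPolynomial σ K) ∈ P
      · have hbig : n * β t ≤ Etot (y t) := by
          rw [hEtot, Finsupp.finset_sum_apply]
          have hle : Esel (p, t) (y t) ≤ ∑ pt : Fin q × Fin l, Esel pt (y t) :=
            Finset.single_le_sum (f := fun pt => Esel pt (y t))
              (fun _ _ => Nat.zero_le _) (Finset.mem_univ (p, t))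
          rw [hEsel] at hle
          simp only [if_neg hOk1, if_pos hxP] at hle
          rwa [Finsupp.single_apply, if_pos rfl] at hle
        have : n * β t * α ≤ (Etot (y t) + e1 (y t)) * α :=
          Nat.mul_le_mul_right α (by omega)
        have hcomm : n * (α * β t) = n * β t * α := by ring
        omega
      · have hbig : n * α ≤ Etot (x p) := by
          rw [hEtot, Finsupp.finset_sum_apply]
          have hle : Esel (p, t) (x p) ≤ ∑ pt : Fin q × Fin l, Esel pt (x p) :=
            Finset.single_le_sum (f := fun pt => Esel pt (x p))
              (fun _ _ => Nat.zero_le _) (Finset.mem_univ (p, t))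
          rw [hEsel] at hle
          simp only [if_neg hOk1, if_neg hxP] at hle
          rwa [Finsupp.single_apply, if_pos rfl] at hle
        have : n * α * β t ≤ (Etot (x p) + e1 (x p)) * β t :=
          Nat.mul_le_mul_right (β t) (by omega)
        have hcomm : n * (α * β t) = n * α * β t := by ring
        omega
  obtain ⟨p1, t1, hbad, hXx, hXy⟩ := hpair
  -- Step 3: P is contained in some Ppair
  have hsub : ∃ p2 t2, P ≤ Ppair (K := K) x y p2 t2 := by
    have hex2 : ∃ pt : Fin q × Fin l,
        Submodule.colon (Jpt (K := K) x y α β n pt.1 pt.2) (Ideal.span {f}) ≤ P := by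
      by_contra hcon
      push_neg at hcon
      have hsel : ∀ pt : Fin q × Fin l, ∃ g, g * f ∈ Jpt (K := K) x y α β n pt.1 pt.2
          ∧ g ∉ P := by
        intro pt
        obtain ⟨g, hg1, hg2⟩ := SetLike.not_le_iff_exists.mp (hcon pt)
        rw [show Ideal.span {f} = Submodule.span (MvPolynomial σ K) {f} from rfl,
          Submodule.mem_colon_span_singleton, smul_eq_mul] at hg1
        exact ⟨g, hg1, hg2⟩
      choose g hg1 hg2 using hsel
      have hGP : (∏ pt : Fin q × Fin l, g pt) ∉ P := prod_not_mem hP _ _ fun pt _ => hg2 pt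
      apply hGP
      rw [hPf]
      refine Ideal.le_radical ?_
      rw [show Ideal.span {f} = Submodule.span (MvPolynomial σ K) {f} from rfl,
        Submodule.mem_colon_span_singleton, smul_eq_mul]
      intro δ hδ p t
      have hrw : (∏ pt : Fin q × Fin l, g pt) * f
          = (∏ pt ∈ Finset.univ.erase (p, t), g pt) * (g (p, t) * f) := by
        rw [← Finset.mul_prod_erase _ g (Finset.mem_univ (p, t))]
        ring
      have hmem : (∏ pt : Fin q × Fin l, g pt) * f ∈ Jpt (K := K) x y α β n p t := by
        rw [hrw]
        exact Ideal.mul_mem_left _ _ (hg1 (p, t))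
      exact hmem δ hδ
    obtain ⟨pt2, hpt2⟩ := hex2
    have hfnot : f ∉ Jpt (K := K) x y α β n pt2.1 pt2.2 := by
      intro hfJ
      apply hPtop
      rw [Ideal.eq_top_iff_one]
      refine hpt2 ?_
      rw [show Ideal.span {f} = Submodule.span (MvPolynomial σ K) {f} from rfl,
        Submodule.mem_colon_span_singleton, smul_eq_mul, one_mul]
      exact hfJ
    refine ⟨pt2.1, pt2.2, fun r hr => ?_⟩
    rw [hPf] at hr
    obtain ⟨m, hr⟩ := Ideal.mem_radical_iff.mp hr
    refine mem_Ppair_of_pow_mem x y α β hα hαβ hxy (m := m)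
      (colon_le_Ppair_of_not_mem x y α β n hxy hf0 hfnot ?_)
    rw [show Ideal.span {f} = Submodule.span (MvPolynomial σ K) {f} from rfl,
      Submodule.mem_colon_span_singleton, smul_eq_mul] at hr ⊢
    exact fun δ hδ => hr δ hδ pt2.1 pt2.2
  obtain ⟨p2, t2, hPle⟩ := hsub
  -- Step 4: conclude
  have hp12 : p1 = p2 := by
    rcases X_mem_Ppair x y (hPle hXx) with h | h
    · exact hx h
    · exact absurd h (hxy p1 t2)
  have ht12 : t1 = t2 := by
    rcases X_mem_Ppair x y (hPle hXy) with h | h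
    · exact absurd h.symm (hxy p2 t1)
    · exact hy h
  refine ⟨p1, t1, e1, he1, ?_, hbad, hXx, hXy⟩
  apply le_antisymm
  · rw [hp12, ht12]
    exact hPle
  · rw [Ppair, Ideal.span_le]
    intro z hz
    rcases Set.mem_insert_iff.mp hz with h | h
    · exact h ▸ hXx
    · rw [Set.mem_singleton_iff.mp h]
      exact hXy

end Context

section Arith

lemma ceil_bound {a β s c : ℕ} (ha : 1 ≤ a) (hb : a ≤ β) (hs : 1 ≤ s)
    (hc : β * s ≤ a * c) : (β + a - 1) / a + (s - 1) ≤ c := by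
  have A1 : (β + a - 1) / a * a ≤ β + a - 1 := Nat.div_mul_le_self _ _
  have A2 : (s - 1) * a ≤ (s - 1) * β := Nat.mul_le_mul_left _ hb
  have A3 : s * β = (s - 1) * β + β := by
    conv_lhs => rw [show s = (s - 1) + 1 by omega]
    rw [Nat.add_mul, one_mul]
  have A5 : β * s = s * β := Nat.mul_comm _ _
  have A6 : ((β + a - 1) / a + (s - 1)) * a = (β + a - 1) / a * a + (s - 1) * a :=
    Nat.add_mul _ _ _
  have A7 : (c + 1) * a = c * a + a := by ring
  have A8 : a * c = c * a := Nat.mul_comm _ _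
  have key : ((β + a - 1) / a + (s - 1)) * a < (c + 1) * a := by omega
  have := Nat.lt_of_mul_lt_mul_right key
  omega

lemma arith {q l n a : ℕ} (hq : 1 ≤ q) (hql : q ≤ l) (hn : 1 ≤ n) (ha : 1 ≤ a)
    {β : Fin l → ℕ} (hαβ : ∀ t, a ≤ β t)
    {av : Fin q → ℕ} {bv : Fin l → ℕ} {p1 : Fin q} {t1 : Fin l}
    (h1 : ∀ p t, (p, t) ≠ (p1, t1) → n * (a * β t) ≤ av p * β t + bv t * a)
    (h2 : n * (a * β t1) ≤ (av p1 + 1) * β t1 + bv t1 * a)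
    (h3 : n * (a * β t1) ≤ av p1 * β t1 + (bv t1 + 1) * a)
    (h4 : ¬ n * (a * β t1) ≤ av p1 * β t1 + bv t1 * a) :
    n * q * a + ∑ t, (β t + a - 1) / a ≤ (∑ p, av p) + (∑ t, bv t) + 2 := by
  classical
  push_neg at h4
  have hβ1 : 1 ≤ β t1 := le_trans ha (hαβ t1)
  have ha1 : av p1 < n * a := by
    have hkey : av p1 * β t1 < (n * a) * β t1 := by
      have : n * (a * β t1) = (n * a) * β t1 := by ring
      omega
    exact Nat.lt_of_mul_lt_mul_right hkey
  set s := n * a - av p1 with hs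
  have hs1 : 1 ≤ s := by omega
  have hsum_a : q * av p1 + (q - 1) ≤ ∑ p, av p := by
    have step : ∀ p : Fin q, av p1 + (if p = p1 then 0 else 1) ≤ av p := by
      intro p
      split_ifs with h
      · subst h; omega
      · have hne : (p, t1) ≠ (p1, t1) := by simp [h]
        have := h1 p t1 hne
        have hkey : av p1 * β t1 < av p * β t1 := by omega
        have := Nat.lt_of_mul_lt_mul_right hkey
        omega
    calc q * av p1 + (q - 1)
        ≤ ∑ p : Fin q, (av p1 + if p = p1 then 0 else 1) := by
          rw [Finset.sum_add_distrib]
          have e1 : ∑ _p : Fin q, av p1 = q * av p1 := by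
            rw [Finset.sum_const, Finset.card_univ, Fintype.card_fin, smul_eq_mul]
          have e2 : (∑ p : Fin q, if p = p1 then (0:ℕ) else 1) = q - 1 := by
            have e3 : (∑ p : Fin q, ((if p = p1 then (0:ℕ) else 1)
                + (if p = p1 then 1 else 0))) = q := by
              have : ∀ p : Fin q, (if p = p1 then (0:ℕ) else 1)
                  + (if p = p1 then 1 else 0) = 1 := by
                intro p; split_ifs <;> rfl
              simp only [this, Finset.sum_const, Finset.card_univ, Fintype.card_fin,
                smul_eq_mul, mul_one]
            rw [Finset.sum_add_distrib, Finset.sum_ite_eq' Finset.univ p1 (fun _ => 1),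
              if_pos (Finset.mem_univ _)] at e3
            omega
          omega
      _ ≤ _ := Finset.sum_le_sum fun p _ => step p
  have hsum_b : (∑ t, (β t + a - 1) / a) + l * (s - 1) ≤ (∑ t, bv t) + 1 := by
    have step : ∀ t : Fin l, (β t + a - 1) / a + (s - 1)
        ≤ bv t + (if t = t1 then 1 else 0) := by
      intro t
      split_ifs with h
      · rw [h]
        refine ceil_bound ha (hαβ t1) hs1 ?_
        have e1 : av p1 * β t1 + s * β t1 = (n * a) * β t1 := by
          rw [← Nat.add_mul]; congr 1; omega
        have e2 : n * (a * β t1) = (n * a) * β t1 := by ring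
        have e3 : β t1 * s = s * β t1 := Nat.mul_comm _ _
        have e4 : a * (bv t1 + 1) = bv t1 * a + a := by ring
        have e5 : (bv t1 + 1) * a = bv t1 * a + a := by ring
        omega
      · rw [Nat.add_zero]
        refine ceil_bound ha (hαβ t) hs1 ?_
        have hne : (p1, t) ≠ (p1, t1) := by simp [h]
        have h5 := h1 p1 t hne
        have e1 : av p1 * β t + s * β t = (n * a) * β t := by
          rw [← Nat.add_mul]; congr 1; omega
        have e2 : n * (a * β t) = (n * a) * β t := by ring
        have e3 : β t * s = s * β t := Nat.mul_comm _ _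
        have e4 : a * bv t = bv t * a := Nat.mul_comm _ _
        omega
    calc (∑ t, (β t + a - 1) / a) + l * (s - 1)
        = ∑ t : Fin l, ((β t + a - 1) / a + (s - 1)) := by
          rw [Finset.sum_add_distrib, Finset.sum_const, Finset.card_univ, Fintype.card_fin,
            smul_eq_mul]
      _ ≤ ∑ t : Fin l, (bv t + if t = t1 then 1 else 0) := Finset.sum_le_sum fun t _ => step t
      _ = (∑ t, bv t) + 1 := by
          rw [Finset.sum_add_distrib, Finset.sum_ite_eq' Finset.univ t1 (fun _ => 1),
            if_pos (Finset.mem_univ _)]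
  -- final bookkeeping
  set SA := ∑ p, av p with hSA
  set SB := ∑ t, bv t with hSB
  set SK := ∑ t, (β t + a - 1) / a with hSK
  have f4 : q * av p1 + q * s = q * (n * a) := by
    rw [← Nat.mul_add]; congr 1; omega
  have f6 : q * (s - 1) ≤ l * (s - 1) := Nat.mul_le_mul_right _ hql
  have f8 : q * s = q * (s - 1) + q := by
    conv_lhs => rw [show s = (s - 1) + 1 by omega]
    rw [Nat.mul_add, Nat.mul_one]
  have f7 : n * q * a = q * (n * a) := by ring
  omega

end Arith

section Context2
variable {K : Type*} [Field K] {σ : Type*}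
variable {q l : ℕ} (x : Fin q → σ) (y : Fin l → σ) (α : ℕ) (β : Fin l → ℕ) (n : ℕ)

lemma mul_X_mem_shift {J : Ideal (MvPolynomial σ K)} {S : Set (σ →₀ ℕ)}
    {hS : ∀ a b, b ∈ S → a + b ∈ S} (hJ : J = suppIdeal S hS) {f : MvPolynomial σ K}
    {s : σ} (h : (X s) * f ∈ J) : ∀ e ∈ f.support, Finsupp.single s 1 + e ∈ S := by
  intro e he
  rw [hJ] at h
  refine h _ ?_
  rw [MvPolynomial.mem_support_iff, coeff_X_mul]
  exact MvPolynomial.mem_support_iff.mp he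

lemma sum_eval_le_degree (hx : Function.Injective x) (hy : Function.Injective y)
    (hxy : ∀ p t, x p ≠ y t) (e : σ →₀ ℕ) :
    (∑ p, e (x p)) + (∑ t, e (y t)) ≤ e.degree := by
  classical
  set Tx := Finset.univ.image x with hTx
  set Ty := Finset.univ.image y with hTy
  have hdisj : Disjoint Tx Ty := by
    rw [Finset.disjoint_left]
    intro s hsx hsy
    obtain ⟨p, _, rfl⟩ := Finset.mem_image.mp hsx
    obtain ⟨t, _, ht⟩ := Finset.mem_image.mp hsy
    exact hxy p t ht.symm
  have h1 : (∑ p, e (x p)) + (∑ t, e (y t)) = ∑ s ∈ Tx ∪ Ty, e s := by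
    rw [Finset.sum_union hdisj, hTx, hTy,
      Finset.sum_image (fun a _ b _ h => hx h), Finset.sum_image (fun a _ b _ h => hy h)]
  rw [h1]
  calc ∑ s ∈ Tx ∪ Ty, e s ≤ ∑ s ∈ (Tx ∪ Ty) ∪ e.support, e s :=
        Finset.sum_le_sum_of_subset Finset.subset_union_left
    _ = ∑ s ∈ e.support, e s := by
        refine (Finset.sum_subset Finset.subset_union_right fun s _ hs => ?_).symm
        exact Finsupp.notMem_support_iff.mp hs
    _ = e.degree := rfl

lemma deg_lower (hq : 1 ≤ q) (hql : q ≤ l) (hx : Function.Injective x)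
    (hy : Function.Injective y) (hxy : ∀ p t, x p ≠ y t) (hα : 1 ≤ α)
    (hαβ : ∀ t, α ≤ β t) (hn : 1 ≤ n) {f : MvPolynomial σ K} (hf0 : f ≠ 0) {d : ℕ}
    (hdhom : f.IsHomogeneous d) {P : Ideal (MvPolynomial σ K)} (hP : P.IsPrime)
    (hPf : P = Submodule.colon (Jcl (K := K) x y α β n) (Ideal.span {f})) :
    n * q * α + ∑ t, (β t + α - 1) / α ≤ d + 2 := by
  classical
  obtain ⟨p1, t1, e1, he1, hPp, hbad, hXx, hXy⟩ :=
    ident x y α β n hq hx hy hxy hα hαβ hn hf0 hP (by rw [← hPf, hP.radical])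
  have hXxf : (X (x p1)) * f ∈ Jcl (K := K) x y α β n := by
    rw [hPf] at hXx
    rw [show Ideal.span {f} = Submodule.span (MvPolynomial σ K) {f} from rfl,
      Submodule.mem_colon_span_singleton, smul_eq_mul] at hXx
    exact hXx
  have hXyf : (X (y t1)) * f ∈ Jcl (K := K) x y α β n := by
    rw [hPf] at hXy
    rw [show Ideal.span {f} = Submodule.span (MvPolynomial σ K) {f} from rfl,
      Submodule.mem_colon_span_singleton, smul_eq_mul] at hXy
    exact hXy
  have hOkx : Finsupp.single (x p1) 1 + e1 ∈ OkS x y α β n :=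
    mul_X_mem_shift rfl hXxf e1 he1
  have hOky : Finsupp.single (y t1) 1 + e1 ∈ OkS x y α β n :=
    mul_X_mem_shift rfl hXyf e1 he1
  -- translate to arithmetic
  have harith : n * q * α + ∑ t, (β t + α - 1) / α
      ≤ (∑ p, e1 (x p)) + (∑ t, e1 (y t)) + 2 := by
    refine arith hq hql hn hα hαβ (p1 := p1) (t1 := t1) ?_ ?_ ?_ ?_
    · intro p t hne
      by_cases hp : p = p1
      · subst hp
        have ht : t ≠ t1 := fun h => hne (by rw [h])
        have h0 := hOky p t
        rw [OkP, Set.mem_setOf_eq, wdeg_wpt x y α β hxy, Finsupp.add_apply,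
          Finsupp.add_apply, Finsupp.single_apply, if_neg (fun h => hxy p t1 h.symm),
          Finsupp.single_apply, if_neg (fun h => ht (hy h).symm)] at h0
        simp only [zero_add] at h0
        omega
      · have h0 := hOkx p t
        rw [OkP, Set.mem_setOf_eq, wdeg_wpt x y α β hxy, Finsupp.add_apply,
          Finsupp.add_apply, Finsupp.single_apply, if_neg (fun h => hp (hx h).symm),
          Finsupp.single_apply, if_neg (hxy p1 t)] at h0
        simp only [zero_add] at h0
        omega
    · have h0 := hOkx p1 t1
      rw [OkP, Set.mem_setOf_eq, wdeg_wpt x y α β hxy, Finsupp.add_apply,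
        Finsupp.add_apply, Finsupp.single_apply, if_pos rfl,
        Finsupp.single_apply, if_neg (hxy p1 t1)] at h0
      simp only [zero_add] at h0
      have he : (1 + e1 (x p1)) * β t1 = (e1 (x p1) + 1) * β t1 := by ring
      omega
    · have h0 := hOky p1 t1
      rw [OkP, Set.mem_setOf_eq, wdeg_wpt x y α β hxy, Finsupp.add_apply,
        Finsupp.add_apply, Finsupp.single_apply, if_neg (fun h => hxy p1 t1 h.symm),
        Finsupp.single_apply, if_pos rfl] at h0
      simp only [zero_add] at h0
      have he : (1 + e1 (y t1)) * α = (e1 (y t1) + 1) * α := by ring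
      omega
    · intro hcon
      apply hbad
      rw [OkP, Set.mem_setOf_eq, wdeg_wpt x y α β hxy]
      exact hcon
  have hdeg : e1.degree = d := by
    rw [Finsupp.degree_eq_weight_one]
    exact hdhom (MvPolynomial.mem_support_iff.mp he1)
  have hsum := sum_eval_le_degree x y hx hy hxy e1
  omega

end Context2

section Context3
variable {K : Type*} [Field K] {σ : Type*}
variable {q l : ℕ} (x : Fin q → σ) (y : Fin l → σ) (α : ℕ) (β : Fin l → ℕ) (n : ℕ)

/-- the witness exponent vector -/
noncomputable def ewit (p1 : Fin q) (t1 : Fin l) : σ →₀ ℕ :=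
  (∑ p, Finsupp.single (x p) (if p = p1 then n * α - 1 else n * α))
    + ∑ t, Finsupp.single (y t) ((β t + α - 1) / α - if t = t1 then 1 else 0)

lemma ewit_x (hx : Function.Injective x) (hxy : ∀ p t, x p ≠ y t) (p1 : Fin q) (t1 : Fin l)
    (p : Fin q) : ewit x y α β n p1 t1 (x p) = if p = p1 then n * α - 1 else n * α := by
  rw [ewit, Finsupp.add_apply, apply_sum_single_of_inj hx,
    apply_sum_single_of_ne _ (fun j => (hxy p j).symm), add_zero]

lemma ewit_y (hy : Function.Injective y) (hxy : ∀ p t, x p ≠ y t) (p1 : Fin q) (t1 : Fin l)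
    (t : Fin l) : ewit x y α β n p1 t1 (y t)
      = (β t + α - 1) / α - if t = t1 then 1 else 0 := by
  rw [ewit, Finsupp.add_apply, apply_sum_single_of_inj hy,
    apply_sum_single_of_ne _ (fun j => hxy j t), zero_add]

lemma kappa_facts (hα : 1 ≤ α) (hαβ : ∀ t, α ≤ β t) (t : Fin l) :
    β t ≤ α * ((β t + α - 1) / α) ∧ α * ((β t + α - 1) / α) < β t + α
      ∧ 1 ≤ (β t + α - 1) / α := by
  have hd := Nat.div_add_mod (β t + α - 1) α
  have hm : (β t + α - 1) % α < α := Nat.mod_lt _ (by omega)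
  have h3 : 1 ≤ (β t + α - 1) / α := (Nat.one_le_div_iff (by omega)).mpr (by
    have := hαβ t; omega)
  have := hαβ t
  omega

lemma witness_hom (hq : 1 ≤ q) (hql : q ≤ l) (hα : 1 ≤ α) (hαβ : ∀ t, α ≤ β t) (hn : 1 ≤ n)
    (p1 : Fin q) (t1 : Fin l) :
    (monomial (ewit x y α β n p1 t1) 1 : MvPolynomial σ K).IsHomogeneous
      (n * q * α + (∑ t, (β t + α - 1) / α) - 2) := by
  refine isHomogeneous_monomial 1 ?_
  have hdeg : (ewit x y α β n p1 t1).degree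
      = (∑ p, (if p = p1 then n * α - 1 else n * α))
        + ∑ t, ((β t + α - 1) / α - if t = t1 then 1 else 0) := by
    rw [Finsupp.degree_eq_weight_one, ewit, map_add, map_sum, map_sum]
    congr 1
    · refine Finset.sum_congr rfl fun p _ => ?_
      rw [Finsupp.weight_apply, Finsupp.sum_single_index] <;> simp
    · refine Finset.sum_congr rfl fun t _ => ?_
      rw [Finsupp.weight_apply, Finsupp.sum_single_index] <;> simp
  rw [hdeg]
  have hna : 1 ≤ n * α := Nat.one_le_iff_ne_zero.mpr (Nat.mul_ne_zero (by omega) (by omega))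
  have hA : (∑ p, (if p = p1 then n * α - 1 else n * α)) + 1 = q * (n * α) := by
    have : ∀ p : Fin q, (if p = p1 then n * α - 1 else n * α) + (if p = p1 then 1 else 0)
        = n * α := by
      intro p; split_ifs <;> omega
    calc (∑ p, (if p = p1 then n * α - 1 else n * α)) + 1
        = ∑ p : Fin q, ((if p = p1 then n * α - 1 else n * α) + if p = p1 then 1 else 0) := by
          rw [Finset.sum_add_distrib, Finset.sum_ite_eq' Finset.univ p1 (fun _ => 1),
            if_pos (Finset.mem_univ _)]
      _ = q * (n * α) := by
          simp only [this, Finset.sum_const, Finset.card_univ, Fintype.card_fin, smul_eq_mul]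
  have hB : (∑ t, ((β t + α - 1) / α - if t = t1 then 1 else 0)) + 1
      = ∑ t, (β t + α - 1) / α := by
    have : ∀ t : Fin l, ((β t + α - 1) / α - if t = t1 then 1 else 0)
        + (if t = t1 then 1 else 0) = (β t + α - 1) / α := by
      intro t
      have := (kappa_facts α β hα hαβ t).2.2
      split_ifs <;> omega
    calc (∑ t, ((β t + α - 1) / α - if t = t1 then 1 else 0)) + 1
        = ∑ t : Fin l, (((β t + α - 1) / α - if t = t1 then 1 else 0)
            + if t = t1 then 1 else 0) := by
          rw [Finset.sum_add_distrib, Finset.sum_ite_eq' Finset.univ t1 (fun _ => 1),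
            if_pos (Finset.mem_univ _)]
      _ = _ := Finset.sum_congr rfl fun t _ => this t
  have hq1 : 1 ≤ q * (n * α) := Nat.one_le_iff_ne_zero.mpr (Nat.mul_ne_zero (by omega) (by omega))
  have hrw : n * q * α = q * (n * α) := by ring
  omega

lemma witness_colon (hq : 1 ≤ q) (hx : Function.Injective x) (hy : Function.Injective y)
    (hxy : ∀ p t, x p ≠ y t) (hα : 1 ≤ α) (hαβ : ∀ t, α ≤ β t) (hn : 1 ≤ n)
    (p1 : Fin q) (t1 : Fin l) :
    Submodule.colon (Jcl (K := K) x y α β n)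
        (Ideal.span {(monomial (ewit x y α β n p1 t1) 1 : MvPolynomial σ K)})
      = Ppair (K := K) x y p1 t1 := by
  classical
  have hna : 1 ≤ n * α := Nat.one_le_iff_ne_zero.mpr (Nat.mul_ne_zero (by omega) (by omega))
  apply le_antisymm
  · -- colon ≤ Ppair
    intro g hg
    have hg' := mem_colon_suppIdeal_monomial.mp hg
    refine (mem_Ppair_iff x y).mpr fun e he => ?_
    by_contra hcon
    push_neg at hcon
    obtain ⟨hex, hey⟩ := hcon
    have h0 := hg' e he p1 t1
    rw [OkP, Set.mem_setOf_eq, wdeg_wpt x y α β hxy, Finsupp.add_apply, Finsupp.add_apply,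
      ewit_x x y α β n hx hxy, ewit_y x y α β n hy hxy, if_pos rfl, if_pos rfl,
      hex, hey] at h0
    simp only [zero_add] at h0
    obtain ⟨hk1, hk2, hk3⟩ := kappa_facts α β hα hαβ t1
    have hb1 : 1 ≤ β t1 := le_trans hα (hαβ t1)
    have e1 : (n * α - 1) * β t1 + β t1 = n * α * β t1 := by
      rw [← Nat.succ_mul, Nat.succ_eq_add_one, Nat.sub_add_cancel hna]
    have e2 : n * (α * β t1) = n * α * β t1 := by ring
    have e3 : ((β t1 + α - 1) / α - 1) * α + α = (β t1 + α - 1) / α * α := by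
      rw [← Nat.succ_mul, Nat.succ_eq_add_one, Nat.sub_add_cancel hk3]
    have e4 : α * ((β t1 + α - 1) / α) = (β t1 + α - 1) / α * α := by ring
    omega
  · -- Ppair ≤ colon
    rw [Ppair, Ideal.span_le]
    intro z hz
    have hmem : ∀ s : σ, (∀ p t, n * (α * β t)
          ≤ ((Finsupp.single s 1 : σ →₀ ℕ) + ewit x y α β n p1 t1) (x p) * β t
            + ((Finsupp.single s 1 : σ →₀ ℕ) + ewit x y α β n p1 t1) (y t) * α) →
        (X s : MvPolynomial σ K) ∈ Submodule.colon (Jcl (K := K) x y α β n)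
          (Ideal.span {(monomial (ewit x y α β n p1 t1) 1 : MvPolynomial σ K)}) := by
      intro s hs
      rw [X]
      refine mem_colon_suppIdeal_monomial.mpr fun ε hε => ?_
      rw [MvPolynomial.support_monomial, if_neg (one_ne_zero (α := K)),
        Finset.mem_singleton] at hε
      subst hε
      intro p t
      rw [OkP, Set.mem_setOf_eq, wdeg_wpt x y α β hxy]
      exact hs p t
    rcases Set.mem_insert_iff.mp hz with h | h
    · subst h
      refine hmem _ fun p t => ?_
      rw [Finsupp.add_apply, Finsupp.add_apply, ewit_x x y α β n hx hxy,
        ewit_y x y α β n hy hxy, Finsupp.single_apply, Finsupp.single_apply,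
        if_neg (hxy p1 t)]
      have e2 : n * (α * β t) = n * α * β t := by ring
      by_cases hp : p = p1
      · subst hp
        rw [if_pos rfl, if_pos rfl]
        have e1 : 1 + (n * α - 1) = n * α := by omega
        rw [e1]
        omega
      · rw [if_neg (fun h => hp (hx h.symm)), if_neg hp]
        simp only [zero_add]
        omega
    · rw [Set.mem_singleton_iff.mp h]
      refine hmem _ fun p t => ?_
      rw [Finsupp.add_apply, Finsupp.add_apply, ewit_x x y α β n hx hxy,
        ewit_y x y α β n hy hxy, Finsupp.single_apply, Finsupp.single_apply,
        if_neg (fun h => hxy p t1 h.symm)]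
      simp only [zero_add]
      have e2 : n * (α * β t) = n * α * β t := by ring
      obtain ⟨hk1, hk2, hk3⟩ := kappa_facts α β hα hαβ t
      by_cases hp : p = p1
      · subst hp
        rw [if_pos rfl]
        have hb1 : 1 ≤ β t := le_trans hα (hαβ t)
        have e1 : (n * α - 1) * β t + β t = n * α * β t := by
          rw [← Nat.succ_mul, Nat.succ_eq_add_one, Nat.sub_add_cancel hna]
        by_cases ht : t = t1
        · subst ht
          rw [if_pos rfl, if_pos rfl]
          have e6 : 1 + ((β t + α - 1) / α - 1) = (β t + α - 1) / α := by omega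
          rw [e6]
          have e4 : α * ((β t + α - 1) / α) = ((β t + α - 1) / α) * α := by ring
          omega
        · rw [if_neg ht, if_neg (fun h => ht (hy h).symm), Nat.sub_zero]
          simp only [zero_add]
          have e4 : α * ((β t + α - 1) / α) = ((β t + α - 1) / α) * α := by ring
          omega
      · rw [if_neg hp]
        rw [e2]
        exact Nat.le_add_right _ _

end Context3

end VP

open VP in
/-- For the height-two complete intersection `I = ⟨(x_{i_1}⋯x_{i_q})^α, x_{j_1}^{β_1}⋯x_{j_l}^{β_l}⟩`
with `1 ≤ α ≤ β_1 ≤ ⋯ ≤ β_l`, `q ≤ l`, and all variables distinct: for every `n ≥ 1` and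
every associated prime `P` of `closure(I^n)`,
`v(closure(I^n)) = v_P(closure(I^n)) = n·qα + ∑ⱼ ⌈βⱼ/α⌉ − 2`. -/
theorem vnumber_intClosure_pow_ht_two_CI
    {K : Type*} [Field K] {σ : Type*} (q l : ℕ) (hq : 1 ≤ q) (hql : q ≤ l)
    (x : Fin q → σ) (y : Fin l → σ)
    (hx : Function.Injective x) (hy : Function.Injective y)
    (hxy : ∀ p t, x p ≠ y t)
    (α : ℕ) (hα : 1 ≤ α) (β : Fin l → ℕ) (hαβ : ∀ t, α ≤ β t) (hβmono : Monotone β)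
    (I : Ideal (MvPolynomial σ K))
    (hI : I = Ideal.span
      {(monomial (∑ p, Finsupp.single (x p) α) 1 : MvPolynomial σ K),
       (monomial (∑ t, Finsupp.single (y t) (β t)) 1 : MvPolynomial σ K)})
    (n : ℕ) (hn : 1 ≤ n)
    (P : Ideal (MvPolynomial σ K))
    (hPass : P ∈ associatedPrimes (MvPolynomial σ K)
      (MvPolynomial σ K ⧸ intClosure (I ^ n))) :
    vnumber (intClosure (I ^ n)) = vnumberAt (intClosure (I ^ n)) P ∧
    (vnumber (intClosure (I ^ n)) : ℤ)
      = (n : ℤ) * (q * α) + ∑ t, ⌈(β t : ℚ) / (α : ℚ)⌉ - 2 := by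
  classical
  have hJ : intClosure (I ^ n) = Jcl (K := K) x y α β n :=
    intClosure_eq x y α β n hq hx hy hxy hα hαβ hn hI
  obtain ⟨hPrime, z, hz⟩ := hPass
  obtain ⟨g, rfl⟩ := Submodule.Quotient.mk_surjective _ z
  have hPg : P = (Submodule.colon (intClosure (I ^ n)) (Ideal.span {g})).radical := by
    rw [hz]
    congr 1
    ext r
    rw [Submodule.mem_colon_singleton, Submodule.mem_bot,
      show Ideal.span {g} = Submodule.span (MvPolynomial σ K) {g} from rfl,
      Submodule.mem_colon_span_singleton, ← Submodule.Quotient.mk_smul,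
      Submodule.Quotient.mk_eq_zero]
  have hg0 : g ≠ 0 := by
    intro h
    apply hPrime.ne_top
    rw [Ideal.eq_top_iff_one, hPg, h]
    refine Ideal.le_radical ?_
    rw [show Ideal.span {(0 : MvPolynomial σ K)}
        = Submodule.span (MvPolynomial σ K) {(0 : MvPolynomial σ K)} from rfl,
      Submodule.mem_colon_span_singleton, smul_zero]
    exact zero_mem _
  have hPg' : P = (Submodule.colon (Jcl (K := K) x y α β n) (Ideal.span {g})).radical := by
    rw [hPg, hJ]
  obtain ⟨p1, t1, e1, he1, hPp, _, _, _⟩ :=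
    ident x y α β n hq hx hy hxy hα hαβ hn hg0 hPrime hPg'
  set D := n * q * α + (∑ t, (β t + α - 1) / α) - 2 with hD
  -- facts for casting
  have hl : 1 ≤ l := le_trans hq hql
  have hsumκ : 1 ≤ ∑ t, (β t + α - 1) / α := by
    haveI : Nonempty (Fin l) := Fin.pos_iff_nonempty.mp hl
    obtain ⟨t0⟩ := (inferInstance : Nonempty (Fin l))
    calc 1 ≤ (β t0 + α - 1) / α := (kappa_facts α β hα hαβ t0).2.2
      _ ≤ _ := Finset.single_le_sum (f := fun t => (β t + α - 1) / α)
          (fun _ _ => Nat.zero_le _) (Finset.mem_univ t0)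
  have h2D : 2 ≤ n * q * α + ∑ t, (β t + α - 1) / α := by
    have : 1 ≤ n * q * α := Nat.one_le_iff_ne_zero.mpr
      (by positivity)
    omega
  -- the witness monomial
  have hwhom := witness_hom x y α β n hq hql hα hαβ hn p1 t1 (K := K)
  have hwcolon : Submodule.colon (intClosure (I ^ n))
      (Ideal.span {(monomial (ewit x y α β n p1 t1) 1 : MvPolynomial σ K)}) = P := by
    rw [hJ, witness_colon x y α β n hq hx hy hxy hα hαβ hn p1 t1, ← hPp]
  -- the two sInf sets
  have hD_in_SP : D ∈ {d : ℕ | ∃ f : MvPolynomial σ K, f.IsHomogeneous d ∧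
      Submodule.colon (intClosure (I ^ n)) (Ideal.span {f}) = P} :=
    ⟨monomial (ewit x y α β n p1 t1) 1, hwhom, hwcolon⟩
  have hD_in_Sv : D ∈ {d : ℕ | ∃ f : MvPolynomial σ K, f.IsHomogeneous d ∧
      Submodule.colon (intClosure (I ^ n)) (Ideal.span {f}) ∈
        associatedPrimes (MvPolynomial σ K) (MvPolynomial σ K ⧸ intClosure (I ^ n))} :=
    ⟨monomial (ewit x y α β n p1 t1) 1, hwhom, by rw [hwcolon]; exact ⟨hPrime, _, hz⟩⟩
  have hgen_lower : ∀ (f : MvPolynomial σ K) (d : ℕ), f.IsHomogeneous d →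
      (Submodule.colon (intClosure (I ^ n)) (Ideal.span {f})).IsPrime → D ≤ d := by
    intro f d hfhom hfprime
    have hf0 : f ≠ 0 := by
      intro h
      apply hfprime.ne_top
      rw [Ideal.eq_top_iff_one, h,
        show Ideal.span {(0 : MvPolynomial σ K)}
          = Submodule.span (MvPolynomial σ K) {(0 : MvPolynomial σ K)} from rfl,
        Submodule.mem_colon_span_singleton, smul_zero]
      exact zero_mem _
    have := deg_lower x y α β n hq hql hx hy hxy hα hαβ hn hf0 hfhom hfprime
      (by rw [hJ])
    omega
  have hv : vnumber (intClosure (I ^ n)) = D := by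
    rw [vnumber]
    refine le_antisymm (Nat.sInf_le hD_in_Sv) (le_csInf ⟨D, hD_in_Sv⟩ ?_)
    rintro d ⟨f, hfhom, hass⟩
    exact hgen_lower f d hfhom hass.isPrime
  have hvP : vnumberAt (intClosure (I ^ n)) P = D := by
    rw [vnumberAt]
    refine le_antisymm (Nat.sInf_le hD_in_SP) (le_csInf ⟨D, hD_in_SP⟩ ?_)
    rintro d ⟨f, hfhom, hcol⟩
    exact hgen_lower f d hfhom (hcol ▸ hPrime)
  refine ⟨by rw [hv, hvP], ?_⟩
  rw [hv]
  have hcast : ∀ t : Fin l, (((β t + α - 1) / α : ℕ) : ℤ) = ⌈(β t : ℚ) / (α : ℚ)⌉ := by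
    intro t
    obtain ⟨hk1, hk2, _⟩ := kappa_facts α β hα hαβ t
    have hαQ : (0 : ℚ) < (α : ℚ) := by positivity
    symm
    rw [Int.ceil_eq_iff]
    constructor
    · rw [lt_div_iff₀ hαQ]
      have hc : ((α * ((β t + α - 1) / α) : ℕ) : ℚ) < ((β t + α : ℕ) : ℚ) := by
        exact_mod_cast hk2
      rw [Int.cast_natCast]
      push_cast at hc
      linarith
    · rw [div_le_iff₀ hαQ]
      have hc : ((β t : ℕ) : ℚ) ≤ ((α * ((β t + α - 1) / α) : ℕ) : ℚ) := by
        exact_mod_cast hk1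
      rw [Int.cast_natCast]
      push_cast at hc
      linarith
  rw [hD, Nat.cast_sub h2D, Nat.cast_add, Nat.cast_sum]
  rw [show ∑ t, (((β t + α - 1) / α : ℕ) : ℤ) = ∑ t, ⌈(β t : ℚ) / (α : ℚ)⌉ from
    Finset.sum_congr rfl fun t _ => hcast t]
  push_cast
  ring
end

section
/- Fix an integer q ≥ 1 and a polynomial ring S = K[x_1,...,x_m] with m ≥ 2 over a field K. Let I = ⟨x_i^{q+1}, x_j^{q+1}⟩ for some i ≠ j. Then for all n ≥ 1, v(I^n) − v(\overline{I^n}) = q; in particular the difference between the v-number of powers and of integral closures of powers of an equigenerated complete intersection monomial ideal can be any prescribed nonnegative integer, independent of n. -/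
open MvPolynomial Ideal

namespace VnumAux
variable {K : Type*} [Field K] {m : ℕ}

/-- Exponent set for the monomial ideal `(x_i^a, x_j^a)^n`. -/
def Tset (i j : Fin m) (a n : ℕ) : Set (Fin m →₀ ℕ) :=
  {u | ∃ s t : ℕ, s + t = n ∧ u = Finsupp.single i (a*s) + Finsupp.single j (a*t)}

/-- The monomial ideal `(x_i^a, x_j^a)^n`. -/
noncomputable def Jmon (K : Type*) [Field K] (i j : Fin m) (a n : ℕ) :
    Ideal (MvPolynomial (Fin m) K) :=
  Ideal.span ((fun s => monomial s (1:K)) '' Tset i j a n)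

variable {i j : Fin m}

lemma pair_le_iff (hij : i ≠ j) {x y : ℕ} {μ : Fin m →₀ ℕ} :
    Finsupp.single i x + Finsupp.single j y ≤ μ ↔ x ≤ μ i ∧ y ≤ μ j := by
  rw [Finsupp.le_def]
  constructor
  · intro h
    constructor
    · have := h i
      simpa [Finsupp.single_apply, hij.symm] using this
    · have := h j
      simpa [Finsupp.single_apply, hij] using this
  · rintro ⟨h1, h2⟩ k
    rcases eq_or_ne k i with rfl | hki
    · simpa [Finsupp.single_apply, hij.symm] using h1
    rcases eq_or_ne k j with rfl | hkj
    · simpa [Finsupp.single_apply, hij] using h2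
    · simp [Finsupp.single_apply, Ne.symm hki, Ne.symm hkj]

lemma mem_Jmon (hij : i ≠ j) {a n : ℕ} {f : MvPolynomial (Fin m) K} :
    f ∈ Jmon K i j a n ↔
      ∀ μ ∈ f.support, ∃ s t : ℕ, s + t = n ∧ a*s ≤ μ i ∧ a*t ≤ μ j := by
  rw [Jmon, mem_ideal_span_monomial_image]
  refine forall₂_congr fun μ hμ => ?_
  constructor
  · rintro ⟨u, ⟨s, t, hst, rfl⟩, hle⟩
    exact ⟨s, t, hst, (pair_le_iff hij).1 hle⟩
  · rintro ⟨s, t, hst, h1, h2⟩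
    exact ⟨_, ⟨s, t, hst, rfl⟩, (pair_le_iff hij).2 ⟨h1, h2⟩⟩

lemma monomial_mem_Jmon (hij : i ≠ j) {a n : ℕ} {e : Fin m →₀ ℕ} :
    monomial e (1:K) ∈ Jmon K i j a n ↔
      ∃ s t : ℕ, s + t = n ∧ a*s ≤ e i ∧ a*t ≤ e j := by
  rw [mem_Jmon hij]
  simp [support_monomial]

lemma Jmon_mul (hij : i ≠ j) (a n n' : ℕ) :
    Jmon K i j a n * Jmon K i j a n' = Jmon K i j a (n + n') := by
  classical
  apply le_antisymm
  · rw [Ideal.mul_le]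
    intro f hf g hg
    rw [mem_Jmon hij] at hf hg ⊢
    intro μ hμ
    obtain ⟨μ₁, h₁, μ₂, h₂, rfl⟩ := Finset.mem_add.1 (MvPolynomial.support_mul f g hμ)
    obtain ⟨s₁, t₁, hst₁, hi₁, hj₁⟩ := hf μ₁ h₁
    obtain ⟨s₂, t₂, hst₂, hi₂, hj₂⟩ := hg μ₂ h₂
    refine ⟨s₁ + s₂, t₁ + t₂, by omega, ?_, ?_⟩ <;>
      simp only [Finsupp.add_apply] <;> rw [Nat.mul_add] <;> omega
  · rw [Jmon, Ideal.span_le]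
    rintro _ ⟨u, ⟨s, t, hst, rfl⟩, rfl⟩
    have hs : s = min s n + (s - min s n) := by omega
    set s₁ := min s n with hs₁
    set t₁ := n - s₁ with ht₁
    set s₂ := s - s₁ with hs₂
    set t₂ := t - t₁ with ht₂
    have ht : t = t₁ + t₂ := by omega
    have hu : Finsupp.single i (a*s) + Finsupp.single j (a*t)
        = (Finsupp.single i (a*s₁) + Finsupp.single j (a*t₁))
          + (Finsupp.single i (a*s₂) + Finsupp.single j (a*t₂)) := by
      rw [hs, ht, Nat.mul_add, Nat.mul_add a t₁ t₂, Finsupp.single_add, Finsupp.single_add]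
      abel
    rw [SetLike.mem_coe, hu]
    have h1 : monomial (Finsupp.single i (a*s₁) + Finsupp.single j (a*t₁)) (1:K)
        ∈ Jmon K i j a n := Ideal.subset_span ⟨_, ⟨s₁, t₁, by omega, rfl⟩, rfl⟩
    have h2 : monomial (Finsupp.single i (a*s₂) + Finsupp.single j (a*t₂)) (1:K)
        ∈ Jmon K i j a n' := Ideal.subset_span ⟨_, ⟨s₂, t₂, by omega, rfl⟩, rfl⟩
    simpa [monomial_mul] using Ideal.mul_mem_mul h1 h2

lemma Jmon_zero (a : ℕ) : Jmon K i j a 0 = ⊤ := by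
  rw [Ideal.eq_top_iff_one]
  have : (1 : MvPolynomial (Fin m) K) = monomial (Finsupp.single i (a*0) + Finsupp.single j (a*0)) 1 := by
    simp
  rw [this]
  exact Ideal.subset_span ⟨_, ⟨0, 0, rfl, rfl⟩, rfl⟩

lemma Jmon_pow (hij : i ≠ j) (a n k : ℕ) :
    (Jmon K i j a n) ^ k = Jmon K i j a (n * k) := by
  induction k with
  | zero => simp [Jmon_zero]
  | succ k ih => rw [pow_succ, ih, Jmon_mul hij, Nat.mul_succ]

lemma mem_J1 (hij : i ≠ j) {b : ℕ} {f : MvPolynomial (Fin m) K} :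
    f ∈ Jmon K i j 1 b ↔ ∀ μ ∈ f.support, b ≤ μ i + μ j := by
  rw [mem_Jmon hij]
  refine forall₂_congr fun μ hμ => ?_
  constructor
  · rintro ⟨s, t, hst, h1, h2⟩; omega
  · intro h; exact ⟨min (μ i) b, b - min (μ i) b, by omega, by omega, by omega⟩

lemma Jmon_le_J1 (hij : i ≠ j) {a n b : ℕ} (hb : b ≤ a * n) :
    Jmon K i j a n ≤ Jmon K i j 1 b := by
  intro f hf
  rw [mem_Jmon hij] at hf
  rw [mem_J1 hij]
  intro μ hμ
  obtain ⟨s, t, hst, h1, h2⟩ := hf μ hμ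
  have : a * s + a * t = a * n := by rw [← Nat.mul_add, hst]
  omega

/-- The projection killing `X i` and `X j`. -/
noncomputable def projIJ (K : Type*) [Field K] (i j : Fin m) :
    MvPolynomial (Fin m) K →ₐ[K] MvPolynomial (Fin m) K :=
  aeval (fun k => if k = i ∨ k = j then 0 else X k)

lemma projIJ_monomial (i j : Fin m) (e : Fin m →₀ ℕ) (c : K) :
    projIJ K i j (monomial e c)
      = if e i = 0 ∧ e j = 0 then monomial e c else 0 := by
  classical
  rw [projIJ, aeval_monomial]
  split_ifs with h
  · have : (e.prod fun k n => (if k = i ∨ k = j then 0 else X k) ^ n)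
        = e.prod fun k n => (X k : MvPolynomial (Fin m) K) ^ n := by
      apply Finsupp.prod_congr
      intro k hk
      have hki : k ≠ i := by rintro rfl; exact (Finsupp.mem_support_iff.1 hk) h.1
      have hkj : k ≠ j := by rintro rfl; exact (Finsupp.mem_support_iff.1 hk) h.2
      simp [hki, hkj]
    rw [this, algebraMap_eq, ← monomial_eq]
  · rw [not_and_or] at h
    rcases h with h | h
    · have hi : i ∈ e.support := Finsupp.mem_support_iff.2 h
      rw [Finsupp.prod, Finset.prod_eq_zero hi (by simp [zero_pow h]), mul_zero]
    · have hj : j ∈ e.support := Finsupp.mem_support_iff.2 h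
      rw [Finsupp.prod, Finset.prod_eq_zero hj (by simp [zero_pow h]), mul_zero]

lemma J1_eq_ker (hij : i ≠ j) :
    Jmon K i j 1 1 = RingHom.ker (projIJ K i j).toRingHom := by
  classical
  apply le_antisymm
  · rw [Jmon, Ideal.span_le]
    rintro _ ⟨u, ⟨s, t, hst, rfl⟩, rfl⟩
    simp only [SetLike.mem_coe, RingHom.mem_ker, AlgHom.toRingHom_eq_coe, RingHom.coe_coe]
    rw [projIJ_monomial]
    have hvi : (Finsupp.single i (1*s) + Finsupp.single j (1*t)) i = s := by
      simp [Finsupp.single_apply, hij.symm]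
    have hvj : (Finsupp.single i (1*s) + Finsupp.single j (1*t)) j = t := by
      simp [Finsupp.single_apply, hij]
    rw [if_neg (by rw [hvi, hvj]; omega)]
  · intro f hf
    rw [mem_J1 hij]
    by_contra hcon
    push_neg at hcon
    obtain ⟨μ, hμ, hw⟩ := hcon
    have hμi : μ i = 0 := by omega
    have hμj : μ j = 0 := by omega
    have key : coeff μ (projIJ K i j f) = coeff μ f := by
      conv_lhs => rw [f.as_sum, map_sum]
      rw [Finset.sum_congr rfl (fun e _ => projIJ_monomial i j e (coeff e f)), coeff_sum]
      rw [Finset.sum_eq_single μ]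
      · rw [if_pos ⟨hμi, hμj⟩, coeff_monomial, if_pos rfl]
      · intro e he hne
        split_ifs with h
        · rw [coeff_monomial, if_neg hne]
        · exact coeff_zero μ
      · intro h; exact absurd hμ h
    rw [RingHom.mem_ker] at hf
    rw [AlgHom.toRingHom_eq_coe, RingHom.coe_coe] at hf
    rw [hf] at key
    simp only [coeff_zero] at key
    exact (Finsupp.mem_support_iff.1 hμ) key.symm

lemma isPrime_J1 (hij : i ≠ j) : (Jmon K i j 1 1).IsPrime := by
  rw [J1_eq_ker hij]
  exact RingHom.ker_isPrime _

lemma single_pair_apply_i (hij : i ≠ j) (x y : ℕ) :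
    (Finsupp.single i x + Finsupp.single j y) i = x := by
  simp [Finsupp.single_apply, hij.symm]

lemma single_pair_apply_j (hij : i ≠ j) (x y : ℕ) :
    (Finsupp.single i x + Finsupp.single j y) j = y := by
  simp [Finsupp.single_apply, hij]

lemma degree_pair (hij : i ≠ j) (x y : ℕ) :
    Finsupp.degree (Finsupp.single i x + Finsupp.single j y) = x + y := by
  rw [Finsupp.degree_eq_weight_one, map_add]
  simp [Finsupp.weight_apply, Finsupp.sum_single_index]

lemma pair_le_degree (hij : i ≠ j) (μ : Fin m →₀ ℕ) :
    μ i + μ j ≤ Finsupp.degree μ := by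
  classical
  rw [← Finset.sum_pair hij, Finsupp.degree]
  calc ∑ k ∈ {i, j}, μ k ≤ ∑ k ∈ {i, j} ∪ μ.support, μ k :=
        Finset.sum_le_sum_of_subset Finset.subset_union_left
    _ = ∑ k ∈ μ.support, μ k :=
        (Finset.sum_subset Finset.subset_union_right
          (fun x _ hx => Finsupp.notMem_support_iff.1 hx)).symm

/-- support fact for `g * monomial e 1`. -/
lemma add_mem_support_mul {g : MvPolynomial (Fin m) K} {μ e : Fin m →₀ ℕ}
    (hμ : μ ∈ g.support) : μ + e ∈ (g * monomial e (1:K)).support := by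
  rw [mem_support_iff, coeff_mul_monomial, mul_one]
  exact mem_support_iff.1 hμ

lemma support_mul_monomial_subset {g : MvPolynomial (Fin m) K} {e : Fin m →₀ ℕ}
    {ν : Fin m →₀ ℕ} (hν : ν ∈ (g * monomial e (1:K)).support) :
    ∃ μ ∈ g.support, ν = μ + e := by
  classical
  obtain ⟨μ₁, h₁, μ₂, h₂, rfl⟩ := Finset.mem_add.1 (support_mul g (monomial e (1:K)) hν)
  rw [support_monomial, if_neg (one_ne_zero)] at h₂
  rw [Finset.mem_singleton] at h₂
  exact ⟨μ₁, h₁, by rw [h₂]⟩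

/-- Colon of the power ideal with the witness monomial equals `P`. -/
lemma colon_Jmon (hij : i ≠ j) {a n : ℕ} (ha : 2 ≤ a) (hn : 1 ≤ n) :
    Submodule.colon (Jmon K i j a n : Submodule _ _)
      (Ideal.span {monomial (Finsupp.single i (a-1) + Finsupp.single j (n*a-1)) (1:K)})
      = Jmon K i j 1 1 := by
  classical
  set e := Finsupp.single i (a-1) + Finsupp.single j (n*a-1) with he
  have hei : e i = a - 1 := single_pair_apply_i hij _ _
  have hej : e j = n*a - 1 := single_pair_apply_j hij _ _
  have hna : 1 ≤ n * a := Nat.mul_pos (by omega) (by omega)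
  ext g
  rw [Ideal.mem_colon_span_singleton, mem_J1 hij, mem_Jmon hij]
  constructor
  · intro hg μ hμ
    by_contra hc
    push_neg at hc
    have hμi : μ i = 0 := by omega
    have hμj : μ j = 0 := by omega
    obtain ⟨s, t, hst, h1, h2⟩ := hg (μ + e) (add_mem_support_mul hμ)
    simp only [Finsupp.add_apply, Finsupp.single_apply, if_pos rfl, if_neg hij,
      if_neg hij.symm, zero_add, add_zero, hμi, hμj] at h1 h2
    have hs : s = 0 := by
      by_contra hs
      have : a ≤ a * s := Nat.le_mul_of_pos_right a (by omega)
      omega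
    have hts : t = n := by omega
    rw [hts, Nat.mul_comm] at h2
    omega
  · intro hg ν hν
    obtain ⟨μ, hμ, rfl⟩ := support_mul_monomial_subset hν
    have hw := hg μ hμ
    simp only [Finsupp.add_apply, Finsupp.single_apply, if_pos rfl, if_neg hij,
      if_neg hij.symm, zero_add, add_zero]
    have key : a * (n-1) + a = n * a := by
      rw [← Nat.mul_succ]
      rw [Nat.mul_comm]
      congr 1
      omega
    rcases Nat.lt_or_ge (μ i) 1 with hi0 | hi1
    · exact ⟨0, n, by omega, by omega, by rw [Nat.mul_comm]; omega⟩
    · exact ⟨1, n - 1, by omega, by omega, by omega⟩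

/-- Colon of the closure ideal with the witness monomial equals `P`. -/
lemma colon_J1 (hij : i ≠ j) {b : ℕ} (hb : 1 ≤ b) :
    Submodule.colon (Jmon K i j 1 b : Submodule _ _)
      (Ideal.span {monomial (Finsupp.single i (b-1) + Finsupp.single j 0) (1:K)})
      = Jmon K i j 1 1 := by
  classical
  set e := Finsupp.single i (b-1) + Finsupp.single j 0 with he
  have hei : e i = b - 1 := single_pair_apply_i hij _ _
  have hej : e j = 0 := single_pair_apply_j hij _ _
  ext g
  rw [Ideal.mem_colon_span_singleton, mem_J1 hij, mem_J1 hij]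
  constructor
  · intro hg μ hμ
    have := hg (μ + e) (add_mem_support_mul hμ)
    simp only [Finsupp.add_apply, Finsupp.single_apply, if_pos rfl, if_neg hij,
      if_neg hij.symm, zero_add, add_zero] at this
    omega
  · intro hg ν hν
    obtain ⟨μ, hμ, rfl⟩ := support_mul_monomial_subset hν
    have := hg μ hμ
    simp only [Finsupp.add_apply, Finsupp.single_apply, if_pos rfl, if_neg hij,
      if_neg hij.symm, zero_add, add_zero]
    omega

/-- If the colon ideal is prime, it is an associated prime of the quotient. -/
lemma colon_mem_associatedPrimes {J : Ideal (MvPolynomial (Fin m) K)}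
    {f : MvPolynomial (Fin m) K}
    (h : (Submodule.colon (J : Submodule _ _) (Ideal.span {f})).IsPrime) :
    Submodule.colon (J : Submodule _ _) (Ideal.span {f}) ∈
      associatedPrimes (MvPolynomial (Fin m) K) (MvPolynomial (Fin m) K ⧸ J) := by
  rw [AssociatedPrimes.mem_iff, isAssociatedPrime_iff]
  refine ⟨h, ⟨Ideal.Quotient.mk J f, ?_⟩⟩
  ext r
  rw [Submodule.mem_colon_singleton, Submodule.mem_bot, Ideal.mem_colon_span_singleton]
  show r * f ∈ J ↔ Ideal.Quotient.mk J (r * f) = 0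
  rw [Ideal.Quotient.eq_zero_iff_mem]


lemma X_pow_mem_Jmon (hij : i ≠ j) (a n : ℕ) :
    (X i : MvPolynomial (Fin m) K) ^ (a*n) ∈ Jmon K i j a n := by
  classical
  rw [X_pow_eq_monomial, mem_Jmon hij]
  intro μ hμ
  rw [support_monomial, if_neg one_ne_zero, Finset.mem_singleton] at hμ
  subst hμ
  exact ⟨n, 0, by omega, by simp, by simp⟩

lemma Xj_pow_mem_Jmon (hij : i ≠ j) (a n : ℕ) :
    (X j : MvPolynomial (Fin m) K) ^ (a*n) ∈ Jmon K i j a n := by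
  classical
  rw [X_pow_eq_monomial, mem_Jmon hij]
  intro μ hμ
  rw [support_monomial, if_neg one_ne_zero, Finset.mem_singleton] at hμ
  subst hμ
  exact ⟨0, n, by omega, by simp, by simp⟩

lemma X_mem_colon {J : Ideal (MvPolynomial (Fin m) K)} {f : MvPolynomial (Fin m) K}
    (hp : (Submodule.colon (J : Submodule _ _) (Ideal.span {f})).IsPrime)
    {k : Fin m} {N : ℕ} (hXk : (X k : MvPolynomial (Fin m) K) ^ N ∈ J) :
    X k * f ∈ J := by
  have h1 : (X k : MvPolynomial (Fin m) K) ^ N ∈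
      Submodule.colon (J : Submodule _ _) (Ideal.span {f}) :=
    Ideal.mem_colon_span_singleton.2 (J.mul_mem_right f hXk)
  exact Ideal.mem_colon_span_singleton.1 (hp.mem_of_pow_mem N h1)

lemma not_mem_of_colon_prime {J : Ideal (MvPolynomial (Fin m) K)} {f : MvPolynomial (Fin m) K}
    (hp : (Submodule.colon (J : Submodule _ _) (Ideal.span {f})).IsPrime) : f ∉ J := by
  intro h
  have h1 : (1 : MvPolynomial (Fin m) K) ∈
      Submodule.colon (J : Submodule _ _) (Ideal.span {f}) :=
    Ideal.mem_colon_span_singleton.2 (by rwa [one_mul])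
  exact hp.ne_top ((Ideal.eq_top_iff_one _).2 h1)

lemma single_add_mem_support {f : MvPolynomial (Fin m) K} {μ : Fin m →₀ ℕ}
    (hμ : μ ∈ f.support) (k : Fin m) :
    Finsupp.single k 1 + μ ∈ (X k * f).support := by
  rw [mem_support_iff, coeff_X_mul]
  exact mem_support_iff.1 hμ

lemma lowerbound_Jmon (hij : i ≠ j) {a n d : ℕ} (ha : 2 ≤ a) (hn : 1 ≤ n)
    {f : MvPolynomial (Fin m) K} (hf : f.IsHomogeneous d)
    (hp : (Submodule.colon (Jmon K i j a n : Submodule _ _) (Ideal.span {f})).IsPrime) :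
    n * a + a - 2 ≤ d := by
  have hXif : X i * f ∈ Jmon K i j a n := X_mem_colon hp (X_pow_mem_Jmon hij a n)
  have hXjf : X j * f ∈ Jmon K i j a n := X_mem_colon hp (Xj_pow_mem_Jmon hij a n)
  have hfJ := not_mem_of_colon_prime hp
  rw [mem_Jmon hij] at hfJ
  push_neg at hfJ
  obtain ⟨μ, hμ, hno⟩ := hfJ
  obtain ⟨s, t, hst, h1, h2⟩ := (mem_Jmon hij).1 hXif _ (single_add_mem_support hμ i)
  obtain ⟨s', t', hst', h1', h2'⟩ := (mem_Jmon hij).1 hXjf _ (single_add_mem_support hμ j)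
  simp [Finsupp.single_apply, hij, hij.symm] at h1 h2 h1' h2'
  have has : a * s = μ i + 1 := by
    rcases Nat.lt_or_ge (μ i) (a*s) with h | h
    · omega
    · have := hno s t hst; omega
  have hat' : a * t' = μ j + 1 := by
    rcases Nat.lt_or_ge (μ j) (a*t') with h | h
    · omega
    · have := hno s' t' hst'; omega
  have htt' : t < t' := Nat.lt_of_mul_lt_mul_left (a := a) (by omega)
  have key : a * (n+1) ≤ a * s + a * t' := by
    rw [← Nat.mul_add]
    exact Nat.mul_le_mul_left a (by omega)
  have hdeg : Finsupp.degree μ = d := by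
    rw [Finsupp.degree_eq_weight_one]
    exact hf (mem_support_iff.1 hμ)
  have hpd := pair_le_degree hij μ
  have hma : a * (n+1) = n*a + a := by rw [Nat.mul_add, Nat.mul_comm]; omega
  omega

lemma lowerbound_J1 (hij : i ≠ j) {b d : ℕ} (hb : 1 ≤ b)
    {f : MvPolynomial (Fin m) K} (hf : f.IsHomogeneous d)
    (hp : (Submodule.colon (Jmon K i j 1 b : Submodule _ _) (Ideal.span {f})).IsPrime) :
    b - 1 ≤ d := by
  have hXif : X i * f ∈ Jmon K i j 1 b := X_mem_colon hp (by
    simpa using X_pow_mem_Jmon (K := K) hij 1 b)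
  have hfJ := not_mem_of_colon_prime hp
  rw [mem_J1 hij] at hfJ
  push_neg at hfJ
  obtain ⟨μ, hμ, hno⟩ := hfJ
  have h1 := (mem_J1 hij).1 hXif _ (single_add_mem_support hμ i)
  simp [Finsupp.single_apply, hij, hij.symm] at h1
  have hdeg : Finsupp.degree μ = d := by
    rw [Finsupp.degree_eq_weight_one]
    exact hf (mem_support_iff.1 hμ)
  have hpd := pair_le_degree hij μ
  omega

lemma vnumber_Jmon (hij : i ≠ j) {a n : ℕ} (ha : 2 ≤ a) (hn : 1 ≤ n) :
    vnumber (Jmon K i j a n) = n * a + a - 2 := by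
  have hna : 1 ≤ n * a := Nat.mul_pos (by omega) (by omega)
  have hprime : (Submodule.colon (Jmon K i j a n : Submodule _ _)
      (Ideal.span {monomial (Finsupp.single i (a-1) + Finsupp.single j (n*a-1)) (1:K)})).IsPrime := by
    rw [colon_Jmon hij ha hn]
    exact isPrime_J1 hij
  have hmem : (n*a + a - 2) ∈ {d : ℕ | ∃ f : MvPolynomial (Fin m) K, f.IsHomogeneous d ∧
      Submodule.colon (Jmon K i j a n : Submodule _ _) (Ideal.span {f}) ∈
        associatedPrimes (MvPolynomial (Fin m) K)
          (MvPolynomial (Fin m) K ⧸ (Jmon K i j a n))} := by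
    refine ⟨monomial (Finsupp.single i (a-1) + Finsupp.single j (n*a-1)) (1:K),
      isHomogeneous_monomial 1 (by rw [degree_pair hij]; omega), ?_⟩
    exact colon_mem_associatedPrimes hprime
  apply le_antisymm (Nat.sInf_le hmem)
  apply le_csInf ⟨_, hmem⟩
  rintro d ⟨f, hfh, hass⟩
  exact lowerbound_Jmon hij ha hn hfh hass.isPrime

lemma vnumber_J1 (hij : i ≠ j) {b : ℕ} (hb : 1 ≤ b) :
    vnumber (Jmon K i j 1 b) = b - 1 := by
  have hprime : (Submodule.colon (Jmon K i j 1 b : Submodule _ _)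
      (Ideal.span {monomial (Finsupp.single i (b-1) + Finsupp.single j 0) (1:K)})).IsPrime := by
    rw [colon_J1 hij hb]
    exact isPrime_J1 hij
  have hmem : (b - 1) ∈ {d : ℕ | ∃ f : MvPolynomial (Fin m) K, f.IsHomogeneous d ∧
      Submodule.colon (Jmon K i j 1 b : Submodule _ _) (Ideal.span {f}) ∈
        associatedPrimes (MvPolynomial (Fin m) K)
          (MvPolynomial (Fin m) K ⧸ (Jmon K i j 1 b))} := by
    refine ⟨monomial (Finsupp.single i (b-1) + Finsupp.single j 0) (1:K),
      isHomogeneous_monomial 1 (by rw [degree_pair hij]; omega), ?_⟩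
    exact colon_mem_associatedPrimes hprime
  apply le_antisymm (Nat.sInf_le hmem)
  apply le_csInf ⟨_, hmem⟩
  rintro d ⟨f, hfh, hass⟩
  exact lowerbound_J1 hij hb hfh hass.isPrime

/-- the weight function -/
def wtf (i j : Fin m) : Fin m → ℕ := fun k => if k = i then 1 else if k = j then 1 else 0

lemma weight_wtf (hij : i ≠ j) (μ : Fin m →₀ ℕ) :
    Finsupp.weight (wtf i j) μ = μ i + μ j := by
  classical
  have hsplit : ∀ k ∈ μ.support, μ k • (wtf i j k)
      = (if k = i then μ k else 0) + (if k = j then μ k else 0) := by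
    intro k _
    rcases eq_or_ne k i with rfl | hki
    · simp [wtf, hij]
    rcases eq_or_ne k j with rfl | hkj
    · simp [wtf, hki]
    · simp [wtf, hki, hkj]
  rw [Finsupp.weight_apply, Finsupp.sum, Finset.sum_congr rfl hsplit,
    Finset.sum_add_distrib, Finset.sum_ite_eq' μ.support i (fun k => μ k),
    Finset.sum_ite_eq' μ.support j (fun k => μ k)]
  have h1 : (if i ∈ μ.support then μ i else 0) = μ i := by
    split_ifs with h
    · rfl
    · exact (Finsupp.notMem_support_iff.1 h).symm
  have h2 : (if j ∈ μ.support then μ j else 0) = μ j := by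
    split_ifs with h
    · rfl
    · exact (Finsupp.notMem_support_iff.1 h).symm
  rw [h1, h2]

lemma isWH_pow {w : Fin m → ℕ} {p : MvPolynomial (Fin m) K} {W : ℕ}
    (h : p.IsWeightedHomogeneous w W) (N : ℕ) :
    (p ^ N).IsWeightedHomogeneous w (N * W) := by
  induction N with
  | zero => simpa using isWeightedHomogeneous_one K w
  | succ k ih =>
    rw [pow_succ, Nat.succ_mul]
    exact ih.mul h

lemma intClosure_Jmon (hij : i ≠ j) {a n : ℕ} (ha : 1 ≤ a) (hn : 1 ≤ n) :
    intClosure (Jmon K i j a n) = Jmon K i j 1 (n*a) := by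
  classical
  have hna : 1 ≤ n * a := Nat.mul_pos (by omega) (by omega)
  apply le_antisymm
  · rw [intClosure, Ideal.span_le]
    rintro z ⟨N, hN, c, hc, heq⟩
    show z ∈ Jmon K i j 1 (n*a)
    by_cases hz : z ∈ Jmon K i j 1 (n*a)
    · exact hz
    exfalso
    have hz0 : z ≠ 0 := fun h => hz (h ▸ (Jmon K i j 1 (n*a)).zero_mem)
    have hsupne : z.support.Nonempty := by
      rw [Finset.nonempty_iff_ne_empty, Ne, MvPolynomial.support_eq_empty]
      exact hz0
    have hKSne : (z.support.image (fun μ => μ i + μ j)).Nonempty := hsupne.image _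
    set W := (z.support.image (fun μ => μ i + μ j)).min' hKSne with hW
    obtain ⟨μ₀, hμ₀, hμ₀W⟩ := Finset.mem_image.1 ((z.support.image _).min'_mem hKSne)
    have hWle : ∀ μ ∈ z.support, W ≤ μ i + μ j := fun μ hμ =>
      Finset.min'_le _ _ (Finset.mem_image_of_mem _ hμ)
    have hWlt : W < n*a := by
      rw [mem_J1 hij] at hz
      push_neg at hz
      obtain ⟨ν, hν, hνlt⟩ := hz
      exact lt_of_le_of_lt (hWle ν hν) hνlt
    have hzW : z ∈ Jmon K i j 1 W := (mem_J1 hij).2 hWle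
    set L := weightedHomogeneousComponent (wtf i j) W z with hL
    have hLhom : L.IsWeightedHomogeneous (wtf i j) W :=
      weightedHomogeneousComponent_isWeightedHomogeneous W z
    have hLco : ∀ μ : Fin m →₀ ℕ, coeff μ L
        = if Finsupp.weight (wtf i j) μ = W then coeff μ z else 0 := fun μ => by
      rw [hL, coeff_weightedHomogeneousComponent]
    have hLne : L ≠ 0 := by
      intro h
      have h2 := hLco μ₀
      rw [h, coeff_zero, weight_wtf hij, hμ₀W, if_pos rfl] at h2
      exact mem_support_iff.1 hμ₀ h2.symm
    have hLW : L ∈ Jmon K i j 1 W := (mem_J1 hij).2 (fun μ hμ => by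
      have := hLhom (mem_support_iff.1 hμ)
      rw [weight_wtf hij] at this
      omega)
    have hh : z - L ∈ Jmon K i j 1 (W+1) := by
      rw [mem_J1 hij]
      intro μ hμ
      have hμz : coeff μ (z - L) ≠ 0 := mem_support_iff.1 hμ
      rw [coeff_sub, hLco μ] at hμz
      by_cases hw : Finsupp.weight (wtf i j) μ = W
      · rw [if_pos hw, sub_self] at hμz
        exact absurd rfl hμz
      · rw [if_neg hw, sub_zero] at hμz
        have h1 := hWle μ (mem_support_iff.2 hμz)
        rw [weight_wtf hij] at hw
        omega
    have hzN : z^N ∈ Jmon K i j 1 (W*N+1) := by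
      have hterm : ∀ k ∈ Finset.Icc 1 N, c k * z^(N-k) ∈ Jmon K i j 1 (W*N+1) := by
        intro k hk
        rw [Finset.mem_Icc] at hk
        have h1 : c k ∈ Jmon K i j 1 (a*(n*k)) := by
          have := hc k (Finset.mem_Icc.2 hk)
          rw [Jmon_pow hij] at this
          exact Jmon_le_J1 hij (le_refl _) this
        have h2 : z^(N-k) ∈ Jmon K i j 1 (W*(N-k)) := by
          have := Ideal.pow_mem_pow hzW (N-k)
          rwa [Jmon_pow hij] at this
        have h3 := Ideal.mul_mem_mul h1 h2
        rw [Jmon_mul hij] at h3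
        refine Jmon_le_J1 hij ?_ h3
        rw [one_mul]
        have e1 : a*(n*k) = (a*n)*k := by ring
        have e2 : W*k + k ≤ (a*n)*k := by
          have hcomm : n*a = a*n := Nat.mul_comm n a
          have := Nat.mul_le_mul_right k (show W+1 ≤ a*n by omega)
          rwa [add_mul, one_mul] at this
        have e3 : W*(N-k) + W*k = W*N := by
          rw [← Nat.mul_add]
          congr 1
          omega
        omega
      have hsum := Ideal.sum_mem _ hterm
      have hzeq : z^N = -∑ k ∈ Finset.Icc 1 N, c k * z^(N-k) :=
        eq_neg_of_add_eq_zero_left heq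
      rw [hzeq]
      exact neg_mem hsum
    have hLN : L^N ∈ Jmon K i j 1 (W*N+1) := by
      have hzLh : z = L + (z - L) := by ring
      have hexp : z^N = ∑ k ∈ Finset.range (N+1), L^k * (z-L)^(N-k) * (N.choose k) := by
        conv_lhs => rw [hzLh, add_pow]
      rw [Finset.sum_range_succ, Nat.sub_self, pow_zero, Nat.choose_self] at hexp
      have hLeq : L^N = z^N - ∑ k ∈ Finset.range N, L^k * (z-L)^(N-k) * (N.choose k) := by
        rw [hexp]
        push_cast
        ring
      rw [hLeq]
      refine sub_mem hzN (Ideal.sum_mem _ (fun k hk => ?_))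
      rw [Finset.mem_range] at hk
      have h1 : L^k ∈ Jmon K i j 1 (W*k) := by
        have := Ideal.pow_mem_pow hLW k
        rwa [Jmon_pow hij] at this
      have h2 : (z-L)^(N-k) ∈ Jmon K i j 1 ((W+1)*(N-k)) := by
        have := Ideal.pow_mem_pow hh (N-k)
        rwa [Jmon_pow hij] at this
      have h3 := Ideal.mul_mem_mul h1 h2
      rw [Jmon_mul hij] at h3
      refine (Jmon K i j 1 (W*N+1)).mul_mem_right _ (Jmon_le_J1 hij ?_ h3)
      rw [one_mul]
      have e1 : (W+1)*(N-k) = W*(N-k) + (N-k) := by ring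
      have e2 : W*k + W*(N-k) = W*N := by
        rw [← Nat.mul_add]
        congr 1
        omega
      omega
    have hLNne : L^N ≠ 0 := pow_ne_zero N hLne
    have hLNsup : (L^N).support.Nonempty := by
      rw [Finset.nonempty_iff_ne_empty, Ne, MvPolynomial.support_eq_empty]
      exact hLNne
    obtain ⟨ν, hν⟩ := hLNsup
    have hνw : Finsupp.weight (wtf i j) ν = N * W := isWH_pow hLhom N (mem_support_iff.1 hν)
    have := (mem_J1 hij).1 hLN ν hν
    rw [weight_wtf hij] at hνw
    have hcomm : N*W = W*N := Nat.mul_comm N W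
    omega
  · rw [Jmon, Ideal.span_le]
    rintro _ ⟨u, ⟨s, t, hst, rfl⟩, rfl⟩
    apply Ideal.subset_span
    set z : MvPolynomial (Fin m) K := monomial (Finsupp.single i (1*s) + Finsupp.single j (1*t)) 1 with hz
    refine ⟨a, by omega, fun k => if k = a then -(z^a) else 0, ?_, ?_⟩
    · intro k hk
      rw [Finset.mem_Icc] at hk
      show (if k = a then -(z^a) else 0) ∈ Jmon K i j a n ^ k
      by_cases hka : k = a
      · rw [if_pos hka, hka]
        refine neg_mem ?_
        rw [Jmon_pow hij]
        have hzpow : z^a = monomial (a • (Finsupp.single i (1*s) + Finsupp.single j (1*t))) (1:K) := by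
          rw [hz, monomial_pow, one_pow]
        rw [hzpow, mem_Jmon hij]
        intro μ hμ
        rw [support_monomial, if_neg one_ne_zero, Finset.mem_singleton] at hμ
        subst hμ
        refine ⟨s, t, by omega, ?_, ?_⟩
        · rw [Finsupp.smul_apply, single_pair_apply_i hij]
          simp [Nat.mul_comm]
        · rw [Finsupp.smul_apply, single_pair_apply_j hij]
          simp [Nat.mul_comm]
      · rw [if_neg hka]
        exact Submodule.zero_mem _
    · have hsum : ∑ k ∈ Finset.Icc 1 a, (if k = a then -(z^a) else 0) * z^(a-k)
          = -(z^a) := by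
        rw [Finset.sum_eq_single a]
        · rw [if_pos rfl, Nat.sub_self, pow_zero, mul_one]
        · intro k _ hka
          rw [if_neg hka, zero_mul]
        · intro h
          exact absurd (Finset.mem_Icc.2 ⟨ha, le_refl a⟩) h
      rw [hsum]
      ring

lemma span_eq_Jmon (hij : i ≠ j) (a : ℕ) :
    Ideal.span {(X i : MvPolynomial (Fin m) K) ^ a, (X j) ^ a} = Jmon K i j a 1 := by
  have himg : (fun s => monomial s (1:K)) '' Tset i j a 1
      = {(X i : MvPolynomial (Fin m) K) ^ a, (X j) ^ a} := by
    ext f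
    constructor
    · rintro ⟨u, ⟨s, t, hst, rfl⟩, rfl⟩
      rcases (by omega : s = 1 ∧ t = 0 ∨ s = 0 ∧ t = 1) with ⟨rfl, rfl⟩ | ⟨rfl, rfl⟩
      · left
        simp [X_pow_eq_monomial]
      · right
        simp [X_pow_eq_monomial]
    · rintro (rfl | rfl)
      · exact ⟨Finsupp.single i (a*1) + Finsupp.single j (a*0), ⟨1, 0, rfl, rfl⟩,
          by simp [X_pow_eq_monomial]⟩
      · exact ⟨Finsupp.single i (a*0) + Finsupp.single j (a*1), ⟨0, 1, rfl, rfl⟩,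
          by simp [X_pow_eq_monomial]⟩
  rw [Jmon, himg]

end VnumAux

open VnumAux in
/-- For any `q ≥ 1`, the equigenerated complete intersection `I = ⟨x_i^{q+1}, x_j^{q+1}⟩`
(with `i ≠ j`, in `K[x_1,…,x_m]`, `m ≥ 2`) satisfies `v(I^n) − v(closure(I^n)) = q`
for all `n ≥ 1`. -/
theorem vnumber_pow_sub_vnumber_intClosure_eq
    {K : Type*} [Field K] (m : ℕ) (hm : 2 ≤ m) (q : ℕ) (hq : 1 ≤ q)
    (i j : Fin m) (hij : i ≠ j)
    (I : Ideal (MvPolynomial (Fin m) K))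
    (hI : I = Ideal.span {(X i : MvPolynomial (Fin m) K) ^ (q + 1), (X j) ^ (q + 1)})
    (n : ℕ) (hn : 1 ≤ n) :
    (vnumber (I ^ n) : ℤ) - (vnumber (intClosure (I ^ n)) : ℤ) = q := by
  subst hI
  rw [span_eq_Jmon hij (q+1), Jmon_pow hij (q+1) 1 n, one_mul]
  rw [vnumber_Jmon hij (a := q+1) (n := n) (by omega) hn]
  rw [intClosure_Jmon hij (a := q+1) (n := n) (by omega) hn, vnumber_J1 hij (Nat.mul_pos hn (Nat.succ_pos q))]
  have h2 : 2 ≤ n * (q+1) := by simpa using Nat.mul_le_mul hn (show 2 ≤ q + 1 by omega)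
  set B := n * (q+1) with hB
  omega
end
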